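/- (Lemma 3 of the appendix.) Consider the maximal-information structure and fix a team strategy (f,g). Then for any adversary strategy gᵃ and any realization (x_{1:t},u_{1:t},m_t) of (X_{1:t},U_{1:t},M_t), the almost-sure identities P^{f,g,gᵃ}[X_{1:t}=x_{1:t},U_{1:t−1}=u_{1:t−1},M_t=m_t | Iᵃ_t] = Ψ_t(Iᵃ_t; x_{1:t},u_{1:t−1},m_t) and P^{f,g,gᵃ}[X_{1:t}=x_{1:t},U_{1:t}=u_{1:t} | Iᵃ_{t⁺}] = Ψ_{t⁺}(Iᵃ_{t⁺}; x_{1:t},u_{1:t}) hold; in particular, these conditional distributions do not depend on the adversary's strategy gᵃ. -/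

import Mathlib

open Finset
open scoped Classical BigOperators

namespace TA

/-- The primitive model of the team-vs-adversary control system (Section II of the paper):
finite horizon `T`, finite global/local state spaces, finite action spaces, independent
initial states, controlled Markovian dynamics given by transition kernels, an erasure
parameter `pe`, an observation kernel `obs` for the adversary's observation `Y_t`,
a stage cost `cost` and a communication cost `commCost`. -/
structure Model where
  T : ℕ
  hT : 0 < T
  X0 : Type
  X1 : Type
  X2 : Type
  U1 : Type
  U2 : Type
  Ua : Type
  Y : Type
  [fX0 : Fintype X0]
  [fX1 : Fintype X1]
  [fX2 : Fintype X2]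
  [fU1 : Fintype U1]
  [fU2 : Fintype U2]
  [fUa : Fintype Ua]
  [fY : Fintype Y]
  [nX0 : Nonempty X0]
  [nX1 : Nonempty X1]
  [nX2 : Nonempty X2]
  [nU1 : Nonempty U1]
  [nU2 : Nonempty U2]
  [nUa : Nonempty Ua]
  [nY : Nonempty Y]
  init0 : X0 → ℝ
  init1 : X1 → ℝ
  init2 : X2 → ℝ
  trans0 : X0 → Ua → X0 → ℝ
  trans1 : X0 → X1 → U1 → X1 → ℝ
  trans2 : X0 → X2 → U2 → X2 → ℝ
  pe : X0 → ℝ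
  obs : Option (X1 × X2) → Bool × Bool → X0 → Y → ℝ
  cost : ℕ → X0 → X1 × X2 → U1 × U2 → Ua → ℝ
  commCost : X0 → X1 × X2 → ℝ
  init0_nonneg : ∀ x, 0 ≤ init0 x
  init1_nonneg : ∀ x, 0 ≤ init1 x
  init2_nonneg : ∀ x, 0 ≤ init2 x
  init0_sum : ∑ x, init0 x = 1
  init1_sum : ∑ x, init1 x = 1
  init2_sum : ∑ x, init2 x = 1
  trans0_nonneg : ∀ x u x', 0 ≤ trans0 x u x'
  trans1_nonneg : ∀ x0 x u x', 0 ≤ trans1 x0 x u x'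
  trans2_nonneg : ∀ x0 x u x', 0 ≤ trans2 x0 x u x'
  trans0_sum : ∀ x u, ∑ x', trans0 x u x' = 1
  trans1_sum : ∀ x0 x u, ∑ x', trans1 x0 x u x' = 1
  trans2_sum : ∀ x0 x u, ∑ x', trans2 x0 x u x' = 1
  pe_nonneg : ∀ x, 0 ≤ pe x
  pe_le_one : ∀ x, pe x ≤ 1
  obs_nonneg : ∀ z m x y, 0 ≤ obs z m x y
  obs_sum : ∀ z m x, ∑ y, obs z m x y = 1

attribute [instance] Model.fX0 Model.fX1 Model.fX2 Model.fU1 Model.fU2 Model.fUa Model.fY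
attribute [instance] Model.nX0 Model.nX1 Model.nX2 Model.nU1 Model.nU2 Model.nUa Model.nY

/-- A full system trajectory over the horizon: global states, local states, communication
decisions, messages over the erasure channel, adversary observations, and all actions. -/
abbrev Traj (M : Model) :=
  (Fin M.T → M.X0) × (Fin M.T → M.X1) × (Fin M.T → M.X2) ×
  (Fin M.T → Bool) × (Fin M.T → Bool) × (Fin M.T → Option (M.X1 × M.X2)) ×
  (Fin M.T → M.Y) × (Fin M.T → M.U1) × (Fin M.T → M.U2) × (Fin M.T → M.Ua)

def idx (M : Model) (t : ℕ) : Fin M.T := if h : t < M.T then ⟨t, h⟩ else ⟨0, M.hT⟩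

variable {M : Model}

def X0v (ω : Traj M) (t : ℕ) : M.X0 := ω.1 (idx M t)
def X1v (ω : Traj M) (t : ℕ) : M.X1 := ω.2.1 (idx M t)
def X2v (ω : Traj M) (t : ℕ) : M.X2 := ω.2.2.1 (idx M t)
def M1v (ω : Traj M) (t : ℕ) : Bool := ω.2.2.2.1 (idx M t)
def M2v (ω : Traj M) (t : ℕ) : Bool := ω.2.2.2.2.1 (idx M t)
def Zv (ω : Traj M) (t : ℕ) : Option (M.X1 × M.X2) := ω.2.2.2.2.2.1 (idx M t)
def Yv (ω : Traj M) (t : ℕ) : M.Y := ω.2.2.2.2.2.2.1 (idx M t)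
def U1v (ω : Traj M) (t : ℕ) : M.U1 := ω.2.2.2.2.2.2.2.1 (idx M t)
def U2v (ω : Traj M) (t : ℕ) : M.U2 := ω.2.2.2.2.2.2.2.2.1 (idx M t)
def UAv (ω : Traj M) (t : ℕ) : M.Ua := ω.2.2.2.2.2.2.2.2.2 (idx M t)
def Mv (ω : Traj M) (t : ℕ) : Bool × Bool := (M1v ω t, M2v ω t)

/-- The list of values `f 0, f 1, …, f (t-1)` (a "prefix" of a stochastic process). -/
def pre {α : Type _} (t : ℕ) (f : ℕ → α) : List α := (List.range t).map f

/-- Realizations of agent 1's information `I¹_t` (resp. `I¹_{t⁺}`):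
`(X⁰_{1:t}, X¹_{1:t}, U¹_{1:t-1}, M_{1:t-1}, Z^er_{1:t-1}, Uᵃ_{1:t-1}, Y_{1:t-1})`. -/
abbrev Hist1 (M : Model) :=
  List M.X0 × List M.X1 × List M.U1 × List (Bool × Bool) ×
  List (Option (M.X1 × M.X2)) × List M.Ua × List M.Y

/-- Realizations of agent 2's information `I²_t` (resp. `I²_{t⁺}`). -/
abbrev Hist2 (M : Model) :=
  List M.X0 × List M.X2 × List M.U2 × List (Bool × Bool) ×
  List (Option (M.X1 × M.X2)) × List M.Ua × List M.Y

/-- Realizations of the team's common information `C^team_t = I¹_t ∩ I²_t`. -/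
abbrev HistC (M : Model) :=
  List M.X0 × List (Bool × Bool) × List (Option (M.X1 × M.X2)) × List M.Ua × List M.Y

def info1 (t : ℕ) (ω : Traj M) : Hist1 M :=
  (pre (t+1) (X0v ω), pre (t+1) (X1v ω), pre t (U1v ω), pre t (Mv ω),
   pre t (Zv ω), pre t (UAv ω), pre t (Yv ω))

def info1p (t : ℕ) (ω : Traj M) : Hist1 M :=
  (pre (t+1) (X0v ω), pre (t+1) (X1v ω), pre t (U1v ω), pre (t+1) (Mv ω),
   pre (t+1) (Zv ω), pre t (UAv ω), pre (t+1) (Yv ω))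

def info2 (t : ℕ) (ω : Traj M) : Hist2 M :=
  (pre (t+1) (X0v ω), pre (t+1) (X2v ω), pre t (U2v ω), pre t (Mv ω),
   pre t (Zv ω), pre t (UAv ω), pre t (Yv ω))

def info2p (t : ℕ) (ω : Traj M) : Hist2 M :=
  (pre (t+1) (X0v ω), pre (t+1) (X2v ω), pre t (U2v ω), pre (t+1) (Mv ω),
   pre (t+1) (Zv ω), pre t (UAv ω), pre (t+1) (Yv ω))

/-- The team's common information `C^team_t` before communication at time `t`. -/
def teamCom (t : ℕ) (ω : Traj M) : HistC M :=
  (pre (t+1) (X0v ω), pre t (Mv ω), pre t (Zv ω), pre t (UAv ω), pre t (Yv ω))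

/-- The team's common information `C^team_{t⁺}` after communication at time `t`. -/
def teamComP (t : ℕ) (ω : Traj M) : HistC M :=
  (pre (t+1) (X0v ω), pre (t+1) (Mv ω), pre (t+1) (Zv ω), pre t (UAv ω), pre (t+1) (Yv ω))

/-- A behavioral communication/control strategy pair `(f,g) = (f¹,f²,g¹,g²)` for the team:
`fⁱ_t` selects a distribution on `{0,1}` for `Mⁱ_t` given `Iⁱ_t`; `gⁱ_t` selects a
distribution on `𝒰ⁱ` for `Uⁱ_t` given `Iⁱ_{t⁺}`. -/
structure TeamStrategy (M : Model) where
  f1 : ℕ → Hist1 M → Bool → ℝ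
  f2 : ℕ → Hist2 M → Bool → ℝ
  g1 : ℕ → Hist1 M → M.U1 → ℝ
  g2 : ℕ → Hist2 M → M.U2 → ℝ
  f1_nonneg : ∀ t h m, 0 ≤ f1 t h m
  f2_nonneg : ∀ t h m, 0 ≤ f2 t h m
  g1_nonneg : ∀ t h u, 0 ≤ g1 t h u
  g2_nonneg : ∀ t h u, 0 ≤ g2 t h u
  f1_sum : ∀ t h, ∑ m, f1 t h m = 1
  f2_sum : ∀ t h, ∑ m, f2 t h m = 1
  g1_sum : ∀ t h, ∑ u, g1 t h u = 1
  g2_sum : ∀ t h, ∑ u, g2 t h u = 1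

/-- A behavioral strategy for the adversary: `gᵃ_t` selects a distribution on `𝒰ᵃ`
given the adversary's information `Iᵃ_{t⁺}`, whose realizations live in `A`. -/
structure AdvStrategy (M : Model) (A : Type _) where
  ga : ℕ → A → M.Ua → ℝ
  ga_nonneg : ∀ t a u, 0 ≤ ga t a u
  ga_sum : ∀ t a, ∑ u, ga t a u = 1

/-- The kernel of the erasure channel: if `M^or_t = 0`, no message; if `M^or_t = 1`, the
joint local state is delivered w.p. `1 - pe(x⁰)` and erased w.p. `pe(x⁰)`. -/
noncomputable def zKer (M : Model) (x0 : M.X0) (m : Bool × Bool) (x : M.X1 × M.X2)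
    (z : Option (M.X1 × M.X2)) : ℝ :=
  if m = (false, false) then (if z = none then 1 else 0)
  else
    match z with
    | none => M.pe x0
    | some x' => if x' = x then 1 - M.pe x0 else 0

/-- The probability of a full trajectory under the team strategy `σ`, the adversary
strategy `γ`, where `iap t ω` is the realization of the adversary's information
`Iᵃ_{t⁺}` along `ω` (this parametrizes the adversary's information structure). -/
noncomputable def prob (σ : TeamStrategy M) {A : Type _} (γ : AdvStrategy M A)
    (iap : ℕ → Traj M → A) (ω : Traj M) : ℝ :=
  M.init0 (X0v ω 0) * M.init1 (X1v ω 0) * M.init2 (X2v ω 0) *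
  (∏ t ∈ Finset.range M.T,
    (σ.f1 t (info1 t ω) (M1v ω t) * σ.f2 t (info2 t ω) (M2v ω t) *
     zKer M (X0v ω t) (Mv ω t) (X1v ω t, X2v ω t) (Zv ω t) *
     M.obs (Zv ω t) (Mv ω t) (X0v ω t) (Yv ω t) *
     σ.g1 t (info1p t ω) (U1v ω t) * σ.g2 t (info2p t ω) (U2v ω t) *
     γ.ga t (iap t ω) (UAv ω t))) *
  (∏ t ∈ Finset.range (M.T - 1),
    (M.trans0 (X0v ω t) (UAv ω t) (X0v ω (t+1)) *
     M.trans1 (X0v ω t) (X1v ω t) (U1v ω t) (X1v ω (t+1)) *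
     M.trans2 (X0v ω t) (X2v ω t) (U2v ω t) (X2v ω (t+1))))

/-- Probability of an event (a set of trajectories). -/
noncomputable def pr (σ : TeamStrategy M) {A : Type _} (γ : AdvStrategy M A)
    (iap : ℕ → Traj M → A) (E : Traj M → Prop) : ℝ :=
  ∑ ω : Traj M, if E ω then prob σ γ iap ω else 0

/-- Conditional probability `P(F | E)`. -/
noncomputable def cpr (σ : TeamStrategy M) {A : Type _} (γ : AdvStrategy M A)
    (iap : ℕ → Traj M → A) (E F : Traj M → Prop) : ℝ :=
  pr σ γ iap (fun ω => F ω ∧ E ω) / pr σ γ iap E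

/-- Total cost `Σ_t c_t(X⁰_t,X_t,U_t,Uᵃ_t) + ρ(X⁰_t,X_t) 1{M^or_t = 1}` along a trajectory. -/
noncomputable def totalCost (ω : Traj M) : ℝ :=
  ∑ t ∈ Finset.range M.T,
    (M.cost t (X0v ω t) (X1v ω t, X2v ω t) (U1v ω t, U2v ω t) (UAv ω t) +
     (if (M1v ω t || M2v ω t) then M.commCost (X0v ω t) (X1v ω t, X2v ω t) else 0))

/-- Expected total cost `J((f,g),gᵃ)`. -/
noncomputable def J (σ : TeamStrategy M) {A : Type _} (γ : AdvStrategy M A)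
    (iap : ℕ → Traj M → A) : ℝ :=
  ∑ ω : Traj M, prob σ γ iap ω * totalCost ω

end TA

namespace TA

/-- The open-loop adversary strategy that deterministically plays the given sequence of
actions (used to define strategy-independent conditional distributions). -/
noncomputable def openLoop (M : Model) (A : Type _) (us : List M.Ua) : AdvStrategy M A where
  ga := fun t _ u => if u = us.getD t (Classical.arbitrary M.Ua) then 1 else 0
  ga_nonneg := by
    intro t a u
    try dsimp only
    split <;> norm_num
  ga_sum := by
    intro t a
    simp

/-- The uniform density on the space of realizations `(x_{1:t}, u_{1:t-1}, m_t)`. -/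
noncomputable def unifComm (M : Model) (t : ℕ) : ℝ :=
  ((Fintype.card M.X1 * Fintype.card M.X2 : ℝ))⁻¹ ^ (t+1) *
  ((Fintype.card M.U1 * Fintype.card M.U2 : ℝ))⁻¹ ^ t * (4 : ℝ)⁻¹

/-- The uniform density on the space of realizations `(x_{1:t}, u_{1:t})`. -/
noncomputable def unifCtrl (M : Model) (t : ℕ) : ℝ :=
  ((Fintype.card M.X1 * Fintype.card M.X2 : ℝ))⁻¹ ^ (t+1) *
  ((Fintype.card M.U1 * Fintype.card M.U2 : ℝ))⁻¹ ^ (t+1)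

/-- In the maximal-information structure, `Iᵃ_t = I¹_t ∩ I²_t = C^team_t`; a realization
`ι` of `Iᵃ_t` contains the list `uᵃ_{1:t-1}` of past adversary actions, from which the
open-loop strategy `hᵃ` is built. -/
noncomputable def advOpen (M : Model) (ι : HistC M) : AdvStrategy M (HistC M) :=
  openLoop M (HistC M) ι.2.2.2.1

/-- `Ψ_t(ι; x_{1:t}, u_{1:t-1}, m_t)`: the conditional distribution of states, past team
actions and current communication decisions given `Iᵃ_t = ι`, computed under the team
strategy `σ` and the open-loop adversary strategy induced by `ι` (and set to the
uniform distribution when `ι` is infeasible). -/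
noncomputable def Psi {M : Model} (σ : TeamStrategy M) (t : ℕ) (ι : HistC M)
    (ξ1 : List M.X1) (ξ2 : List M.X2) (υ1 : List M.U1) (υ2 : List M.U2)
    (mt : Bool × Bool) : ℝ :=
  if 0 < pr σ (advOpen M ι) teamComP (fun ω => teamCom t ω = ι) then
    cpr σ (advOpen M ι) teamComP (fun ω => teamCom t ω = ι)
      (fun ω => pre (t+1) (X1v ω) = ξ1 ∧ pre (t+1) (X2v ω) = ξ2 ∧
                pre t (U1v ω) = υ1 ∧ pre t (U2v ω) = υ2 ∧ Mv ω t = mt)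
  else unifComm M t

/-- `Ψ_{t⁺}(ι; x_{1:t}, u_{1:t})`: the analogous conditional distribution given
`Iᵃ_{t⁺} = ι`. -/
noncomputable def PsiP {M : Model} (σ : TeamStrategy M) (t : ℕ) (ι : HistC M)
    (ξ1 : List M.X1) (ξ2 : List M.X2) (υ1 : List M.U1) (υ2 : List M.U2) : ℝ :=
  if 0 < pr σ (advOpen M ι) teamComP (fun ω => teamComP t ω = ι) then
    cpr σ (advOpen M ι) teamComP (fun ω => teamComP t ω = ι)
      (fun ω => pre (t+1) (X1v ω) = ξ1 ∧ pre (t+1) (X2v ω) = ξ2 ∧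
                pre (t+1) (U1v ω) = υ1 ∧ pre (t+1) (U2v ω) = υ2)
  else unifCtrl M t

end TA

namespace TA



section Lemma3Infra

variable {M : Model}

/-! ### Single-coordinate update lenses on trajectories -/

def uX0 (j : ℕ) (v : M.X0) (ω : Traj M) : Traj M :=
  (Function.update ω.1 (idx M j) v, ω.2)
def uX1 (j : ℕ) (v : M.X1) (ω : Traj M) : Traj M :=
  (ω.1, Function.update ω.2.1 (idx M j) v, ω.2.2)
def uX2 (j : ℕ) (v : M.X2) (ω : Traj M) : Traj M :=
  (ω.1, ω.2.1, Function.update ω.2.2.1 (idx M j) v, ω.2.2.2)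
def uM1 (j : ℕ) (v : Bool) (ω : Traj M) : Traj M :=
  (ω.1, ω.2.1, ω.2.2.1, Function.update ω.2.2.2.1 (idx M j) v, ω.2.2.2.2)
def uM2 (j : ℕ) (v : Bool) (ω : Traj M) : Traj M :=
  (ω.1, ω.2.1, ω.2.2.1, ω.2.2.2.1, Function.update ω.2.2.2.2.1 (idx M j) v, ω.2.2.2.2.2)
def uZ (j : ℕ) (v : Option (M.X1 × M.X2)) (ω : Traj M) : Traj M :=
  (ω.1, ω.2.1, ω.2.2.1, ω.2.2.2.1, ω.2.2.2.2.1,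
   Function.update ω.2.2.2.2.2.1 (idx M j) v, ω.2.2.2.2.2.2)
def uY (j : ℕ) (v : M.Y) (ω : Traj M) : Traj M :=
  (ω.1, ω.2.1, ω.2.2.1, ω.2.2.2.1, ω.2.2.2.2.1, ω.2.2.2.2.2.1,
   Function.update ω.2.2.2.2.2.2.1 (idx M j) v, ω.2.2.2.2.2.2.2)
def uU1 (j : ℕ) (v : M.U1) (ω : Traj M) : Traj M :=
  (ω.1, ω.2.1, ω.2.2.1, ω.2.2.2.1, ω.2.2.2.2.1, ω.2.2.2.2.2.1, ω.2.2.2.2.2.2.1,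
   Function.update ω.2.2.2.2.2.2.2.1 (idx M j) v, ω.2.2.2.2.2.2.2.2)
def uU2 (j : ℕ) (v : M.U2) (ω : Traj M) : Traj M :=
  (ω.1, ω.2.1, ω.2.2.1, ω.2.2.2.1, ω.2.2.2.2.1, ω.2.2.2.2.2.1, ω.2.2.2.2.2.2.1,
   ω.2.2.2.2.2.2.2.1, Function.update ω.2.2.2.2.2.2.2.2.1 (idx M j) v, ω.2.2.2.2.2.2.2.2.2)
def uUa (j : ℕ) (v : M.Ua) (ω : Traj M) : Traj M :=
  (ω.1, ω.2.1, ω.2.2.1, ω.2.2.2.1, ω.2.2.2.2.1, ω.2.2.2.2.2.1, ω.2.2.2.2.2.2.1,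
   ω.2.2.2.2.2.2.2.1, ω.2.2.2.2.2.2.2.2.1, Function.update ω.2.2.2.2.2.2.2.2.2 (idx M j) v)

lemma idx_eq {j : ℕ} (hj : j < M.T) : idx M j = ⟨j, hj⟩ := dif_pos hj

lemma idx_ne {r j : ℕ} (hr : r < j) (hj : j < M.T) : idx M r ≠ idx M j := by
  have hrT : r < M.T := lt_trans hr hj
  rw [idx_eq hrT, idx_eq hj]
  simp [Fin.ext_iff]; omega

/-! ### Pointwise evaluation lemmas -/

lemma X0v_u {r j : ℕ} {v : M.X0} {ω : Traj M} (hr : r < j) (hj : j < M.T) : X0v (uX0 j v ω) r = X0v ω r := by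
  simp [X0v, uX0, Function.update_of_ne (idx_ne hr hj)]
lemma X0v_u_self {j : ℕ} {v : M.X0} {ω : Traj M} : X0v (uX0 j v ω) j = v := by simp [X0v, uX0]
lemma X1v_u {r j : ℕ} {v : M.X1} {ω : Traj M} (hr : r < j) (hj : j < M.T) : X1v (uX1 j v ω) r = X1v ω r := by
  simp [X1v, uX1, Function.update_of_ne (idx_ne hr hj)]
lemma X1v_u_self {j : ℕ} {v : M.X1} {ω : Traj M} : X1v (uX1 j v ω) j = v := by simp [X1v, uX1]
lemma X2v_u {r j : ℕ} {v : M.X2} {ω : Traj M} (hr : r < j) (hj : j < M.T) : X2v (uX2 j v ω) r = X2v ω r := by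
  simp [X2v, uX2, Function.update_of_ne (idx_ne hr hj)]
lemma X2v_u_self {j : ℕ} {v : M.X2} {ω : Traj M} : X2v (uX2 j v ω) j = v := by simp [X2v, uX2]
lemma M1v_u {r j : ℕ} {v : Bool} {ω : Traj M} (hr : r < j) (hj : j < M.T) : M1v (uM1 j v ω) r = M1v ω r := by
  simp [M1v, uM1, Function.update_of_ne (idx_ne hr hj)]
lemma M1v_u_self {j : ℕ} {v : Bool} {ω : Traj M} : M1v (uM1 j v ω) j = v := by simp [M1v, uM1]
lemma M2v_u {r j : ℕ} {v : Bool} {ω : Traj M} (hr : r < j) (hj : j < M.T) : M2v (uM2 j v ω) r = M2v ω r := by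
  simp [M2v, uM2, Function.update_of_ne (idx_ne hr hj)]
lemma M2v_u_self {j : ℕ} {v : Bool} {ω : Traj M} : M2v (uM2 j v ω) j = v := by simp [M2v, uM2]
lemma Zv_u {r j : ℕ} {v : Option (M.X1 × M.X2)} {ω : Traj M} (hr : r < j) (hj : j < M.T) : Zv (uZ j v ω) r = Zv ω r := by
  simp [Zv, uZ, Function.update_of_ne (idx_ne hr hj)]
lemma Zv_u_self {j : ℕ} {v : Option (M.X1 × M.X2)} {ω : Traj M} : Zv (uZ j v ω) j = v := by simp [Zv, uZ]
lemma Yv_u {r j : ℕ} {v : M.Y} {ω : Traj M} (hr : r < j) (hj : j < M.T) : Yv (uY j v ω) r = Yv ω r := by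
  simp [Yv, uY, Function.update_of_ne (idx_ne hr hj)]
lemma Yv_u_self {j : ℕ} {v : M.Y} {ω : Traj M} : Yv (uY j v ω) j = v := by simp [Yv, uY]
lemma U1v_u {r j : ℕ} {v : M.U1} {ω : Traj M} (hr : r < j) (hj : j < M.T) : U1v (uU1 j v ω) r = U1v ω r := by
  simp [U1v, uU1, Function.update_of_ne (idx_ne hr hj)]
lemma U1v_u_self {j : ℕ} {v : M.U1} {ω : Traj M} : U1v (uU1 j v ω) j = v := by simp [U1v, uU1]
lemma U2v_u {r j : ℕ} {v : M.U2} {ω : Traj M} (hr : r < j) (hj : j < M.T) : U2v (uU2 j v ω) r = U2v ω r := by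
  simp [U2v, uU2, Function.update_of_ne (idx_ne hr hj)]
lemma U2v_u_self {j : ℕ} {v : M.U2} {ω : Traj M} : U2v (uU2 j v ω) j = v := by simp [U2v, uU2]
lemma UAv_u {r j : ℕ} {v : M.Ua} {ω : Traj M} (hr : r < j) (hj : j < M.T) : UAv (uUa j v ω) r = UAv ω r := by
  simp [UAv, uUa, Function.update_of_ne (idx_ne hr hj)]
lemma UAv_u_self {j : ℕ} {v : M.Ua} {ω : Traj M} : UAv (uUa j v ω) j = v := by simp [UAv, uUa]
lemma Mv_uM1 {r j : ℕ} {v : Bool} {ω : Traj M} (hr : r < j) (hj : j < M.T) : Mv (uM1 j v ω) r = Mv ω r := by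
  simp [Mv, M1v_u hr hj]; rfl
lemma Mv_uM2 {r j : ℕ} {v : Bool} {ω : Traj M} (hr : r < j) (hj : j < M.T) : Mv (uM2 j v ω) r = Mv ω r := by
  simp [Mv, M2v_u hr hj]; rfl
lemma Mv_uM1_self {j : ℕ} {v : Bool} {ω : Traj M} : Mv (uM1 j v ω) j = (v, M2v ω j) := by
  simp [Mv, M1v_u_self]; rfl
lemma Mv_uM2_self {j : ℕ} {v : Bool} {ω : Traj M} : Mv (uM2 j v ω) j = (M1v ω j, v) := by
  simp [Mv, M2v_u_self]; rfl

end Lemma3Infra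


section Lemma3Infra2
variable {M : Model} {s j : ℕ} {ω : Traj M}

lemma pre_congr {α : Type _} {k : ℕ} {f g : ℕ → α} (h : ∀ r, r < k → f r = g r) :
    pre k f = pre k g := by
  unfold pre
  exact List.map_congr_left fun r hr => h r (List.mem_range.mp hr)

lemma pre_uX0 {k : ℕ} {v : M.X0} (hk : k ≤ j) (hj : j < M.T) :
    pre k (X0v (uX0 j v ω)) = pre k (X0v ω) :=
  pre_congr fun r hr => X0v_u (lt_of_lt_of_le hr hk) hj

lemma pre_uX1 {k : ℕ} {v : M.X1} (hk : k ≤ j) (hj : j < M.T) :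
    pre k (X1v (uX1 j v ω)) = pre k (X1v ω) :=
  pre_congr fun r hr => X1v_u (lt_of_lt_of_le hr hk) hj

lemma pre_uX2 {k : ℕ} {v : M.X2} (hk : k ≤ j) (hj : j < M.T) :
    pre k (X2v (uX2 j v ω)) = pre k (X2v ω) :=
  pre_congr fun r hr => X2v_u (lt_of_lt_of_le hr hk) hj

lemma pre_uM1 {k : ℕ} {v : Bool} (hk : k ≤ j) (hj : j < M.T) :
    pre k (Mv (uM1 j v ω)) = pre k (Mv ω) :=
  pre_congr fun r hr => Mv_uM1 (lt_of_lt_of_le hr hk) hj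

lemma pre_uM2 {k : ℕ} {v : Bool} (hk : k ≤ j) (hj : j < M.T) :
    pre k (Mv (uM2 j v ω)) = pre k (Mv ω) :=
  pre_congr fun r hr => Mv_uM2 (lt_of_lt_of_le hr hk) hj

lemma pre_uZ {k : ℕ} {v : Option (M.X1 × M.X2)} (hk : k ≤ j) (hj : j < M.T) :
    pre k (Zv (uZ j v ω)) = pre k (Zv ω) :=
  pre_congr fun r hr => Zv_u (lt_of_lt_of_le hr hk) hj

lemma pre_uY {k : ℕ} {v : M.Y} (hk : k ≤ j) (hj : j < M.T) :
    pre k (Yv (uY j v ω)) = pre k (Yv ω) :=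
  pre_congr fun r hr => Yv_u (lt_of_lt_of_le hr hk) hj

lemma pre_uU1 {k : ℕ} {v : M.U1} (hk : k ≤ j) (hj : j < M.T) :
    pre k (U1v (uU1 j v ω)) = pre k (U1v ω) :=
  pre_congr fun r hr => U1v_u (lt_of_lt_of_le hr hk) hj

lemma pre_uU2 {k : ℕ} {v : M.U2} (hk : k ≤ j) (hj : j < M.T) :
    pre k (U2v (uU2 j v ω)) = pre k (U2v ω) :=
  pre_congr fun r hr => U2v_u (lt_of_lt_of_le hr hk) hj

lemma pre_uUa {k : ℕ} {v : M.Ua} (hk : k ≤ j) (hj : j < M.T) :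
    pre k (UAv (uUa j v ω)) = pre k (UAv ω) :=
  pre_congr fun r hr => UAv_u (lt_of_lt_of_le hr hk) hj

lemma info1_uX0 {v : M.X0} (hs : s < j) (hj : j < M.T) :
    info1 s (uX0 j v ω) = info1 s ω := by
  unfold info1; rw [pre_uX0 hs hj]; all_goals rfl

lemma info1_uX1 {v : M.X1} (hs : s < j) (hj : j < M.T) :
    info1 s (uX1 j v ω) = info1 s ω := by
  unfold info1; rw [pre_uX1 hs hj]; all_goals rfl

lemma info1_uX2 {v : M.X2} :
    info1 s (uX2 j v ω) = info1 s ω := rfl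

lemma info1_uM1 {v : Bool} (hs : s ≤ j) (hj : j < M.T) :
    info1 s (uM1 j v ω) = info1 s ω := by
  unfold info1; rw [pre_uM1 hs hj]; all_goals rfl

lemma info1_uM2 {v : Bool} (hs : s ≤ j) (hj : j < M.T) :
    info1 s (uM2 j v ω) = info1 s ω := by
  unfold info1; rw [pre_uM2 hs hj]; all_goals rfl

lemma info1_uZ {v : Option (M.X1 × M.X2)} (hs : s ≤ j) (hj : j < M.T) :
    info1 s (uZ j v ω) = info1 s ω := by
  unfold info1; rw [pre_uZ hs hj]; all_goals rfl

lemma info1_uY {v : M.Y} (hs : s ≤ j) (hj : j < M.T) :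
    info1 s (uY j v ω) = info1 s ω := by
  unfold info1; rw [pre_uY hs hj]; all_goals rfl

lemma info1_uU1 {v : M.U1} (hs : s ≤ j) (hj : j < M.T) :
    info1 s (uU1 j v ω) = info1 s ω := by
  unfold info1; rw [pre_uU1 hs hj]; all_goals rfl

lemma info1_uU2 {v : M.U2} :
    info1 s (uU2 j v ω) = info1 s ω := rfl

lemma info1_uUa {v : M.Ua} (hs : s ≤ j) (hj : j < M.T) :
    info1 s (uUa j v ω) = info1 s ω := by
  unfold info1; rw [pre_uUa hs hj]; all_goals rfl

lemma info2_uX0 {v : M.X0} (hs : s < j) (hj : j < M.T) :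
    info2 s (uX0 j v ω) = info2 s ω := by
  unfold info2; rw [pre_uX0 hs hj]; all_goals rfl

lemma info2_uX1 {v : M.X1} :
    info2 s (uX1 j v ω) = info2 s ω := rfl

lemma info2_uX2 {v : M.X2} (hs : s < j) (hj : j < M.T) :
    info2 s (uX2 j v ω) = info2 s ω := by
  unfold info2; rw [pre_uX2 hs hj]; all_goals rfl

lemma info2_uM1 {v : Bool} (hs : s ≤ j) (hj : j < M.T) :
    info2 s (uM1 j v ω) = info2 s ω := by
  unfold info2; rw [pre_uM1 hs hj]; all_goals rfl

lemma info2_uM2 {v : Bool} (hs : s ≤ j) (hj : j < M.T) :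
    info2 s (uM2 j v ω) = info2 s ω := by
  unfold info2; rw [pre_uM2 hs hj]; all_goals rfl

lemma info2_uZ {v : Option (M.X1 × M.X2)} (hs : s ≤ j) (hj : j < M.T) :
    info2 s (uZ j v ω) = info2 s ω := by
  unfold info2; rw [pre_uZ hs hj]; all_goals rfl

lemma info2_uY {v : M.Y} (hs : s ≤ j) (hj : j < M.T) :
    info2 s (uY j v ω) = info2 s ω := by
  unfold info2; rw [pre_uY hs hj]; all_goals rfl

lemma info2_uU1 {v : M.U1} :
    info2 s (uU1 j v ω) = info2 s ω := rfl

lemma info2_uU2 {v : M.U2} (hs : s ≤ j) (hj : j < M.T) :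
    info2 s (uU2 j v ω) = info2 s ω := by
  unfold info2; rw [pre_uU2 hs hj]; all_goals rfl

lemma info2_uUa {v : M.Ua} (hs : s ≤ j) (hj : j < M.T) :
    info2 s (uUa j v ω) = info2 s ω := by
  unfold info2; rw [pre_uUa hs hj]; all_goals rfl

lemma info1p_uX0 {v : M.X0} (hs : s < j) (hj : j < M.T) :
    info1p s (uX0 j v ω) = info1p s ω := by
  unfold info1p; rw [pre_uX0 hs hj]; all_goals rfl

lemma info1p_uX1 {v : M.X1} (hs : s < j) (hj : j < M.T) :
    info1p s (uX1 j v ω) = info1p s ω := by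
  unfold info1p; rw [pre_uX1 hs hj]; all_goals rfl

lemma info1p_uX2 {v : M.X2} :
    info1p s (uX2 j v ω) = info1p s ω := rfl

lemma info1p_uM1 {v : Bool} (hs : s < j) (hj : j < M.T) :
    info1p s (uM1 j v ω) = info1p s ω := by
  unfold info1p; rw [pre_uM1 hs hj]; all_goals rfl

lemma info1p_uM2 {v : Bool} (hs : s < j) (hj : j < M.T) :
    info1p s (uM2 j v ω) = info1p s ω := by
  unfold info1p; rw [pre_uM2 hs hj]; all_goals rfl

lemma info1p_uZ {v : Option (M.X1 × M.X2)} (hs : s < j) (hj : j < M.T) :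
    info1p s (uZ j v ω) = info1p s ω := by
  unfold info1p; rw [pre_uZ hs hj]; all_goals rfl

lemma info1p_uY {v : M.Y} (hs : s < j) (hj : j < M.T) :
    info1p s (uY j v ω) = info1p s ω := by
  unfold info1p; rw [pre_uY hs hj]; all_goals rfl

lemma info1p_uU1 {v : M.U1} (hs : s ≤ j) (hj : j < M.T) :
    info1p s (uU1 j v ω) = info1p s ω := by
  unfold info1p; rw [pre_uU1 hs hj]; all_goals rfl

lemma info1p_uU2 {v : M.U2} :
    info1p s (uU2 j v ω) = info1p s ω := rfl

lemma info1p_uUa {v : M.Ua} (hs : s ≤ j) (hj : j < M.T) :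
    info1p s (uUa j v ω) = info1p s ω := by
  unfold info1p; rw [pre_uUa hs hj]; all_goals rfl

lemma info2p_uX0 {v : M.X0} (hs : s < j) (hj : j < M.T) :
    info2p s (uX0 j v ω) = info2p s ω := by
  unfold info2p; rw [pre_uX0 hs hj]; all_goals rfl

lemma info2p_uX1 {v : M.X1} :
    info2p s (uX1 j v ω) = info2p s ω := rfl

lemma info2p_uX2 {v : M.X2} (hs : s < j) (hj : j < M.T) :
    info2p s (uX2 j v ω) = info2p s ω := by
  unfold info2p; rw [pre_uX2 hs hj]; all_goals rfl

lemma info2p_uM1 {v : Bool} (hs : s < j) (hj : j < M.T) :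
    info2p s (uM1 j v ω) = info2p s ω := by
  unfold info2p; rw [pre_uM1 hs hj]; all_goals rfl

lemma info2p_uM2 {v : Bool} (hs : s < j) (hj : j < M.T) :
    info2p s (uM2 j v ω) = info2p s ω := by
  unfold info2p; rw [pre_uM2 hs hj]; all_goals rfl

lemma info2p_uZ {v : Option (M.X1 × M.X2)} (hs : s < j) (hj : j < M.T) :
    info2p s (uZ j v ω) = info2p s ω := by
  unfold info2p; rw [pre_uZ hs hj]; all_goals rfl

lemma info2p_uY {v : M.Y} (hs : s < j) (hj : j < M.T) :
    info2p s (uY j v ω) = info2p s ω := by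
  unfold info2p; rw [pre_uY hs hj]; all_goals rfl

lemma info2p_uU1 {v : M.U1} :
    info2p s (uU1 j v ω) = info2p s ω := rfl

lemma info2p_uU2 {v : M.U2} (hs : s ≤ j) (hj : j < M.T) :
    info2p s (uU2 j v ω) = info2p s ω := by
  unfold info2p; rw [pre_uU2 hs hj]; all_goals rfl

lemma info2p_uUa {v : M.Ua} (hs : s ≤ j) (hj : j < M.T) :
    info2p s (uUa j v ω) = info2p s ω := by
  unfold info2p; rw [pre_uUa hs hj]; all_goals rfl

lemma teamCom_uX0 {v : M.X0} (hs : s < j) (hj : j < M.T) :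
    teamCom s (uX0 j v ω) = teamCom s ω := by
  unfold teamCom; rw [pre_uX0 hs hj]; all_goals rfl

lemma teamCom_uX1 {v : M.X1} :
    teamCom s (uX1 j v ω) = teamCom s ω := rfl

lemma teamCom_uX2 {v : M.X2} :
    teamCom s (uX2 j v ω) = teamCom s ω := rfl

lemma teamCom_uM1 {v : Bool} (hs : s ≤ j) (hj : j < M.T) :
    teamCom s (uM1 j v ω) = teamCom s ω := by
  unfold teamCom; rw [pre_uM1 hs hj]; all_goals rfl

lemma teamCom_uM2 {v : Bool} (hs : s ≤ j) (hj : j < M.T) :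
    teamCom s (uM2 j v ω) = teamCom s ω := by
  unfold teamCom; rw [pre_uM2 hs hj]; all_goals rfl

lemma teamCom_uZ {v : Option (M.X1 × M.X2)} (hs : s ≤ j) (hj : j < M.T) :
    teamCom s (uZ j v ω) = teamCom s ω := by
  unfold teamCom; rw [pre_uZ hs hj]; all_goals rfl

lemma teamCom_uY {v : M.Y} (hs : s ≤ j) (hj : j < M.T) :
    teamCom s (uY j v ω) = teamCom s ω := by
  unfold teamCom; rw [pre_uY hs hj]; all_goals rfl

lemma teamCom_uU1 {v : M.U1} :
    teamCom s (uU1 j v ω) = teamCom s ω := rfl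

lemma teamCom_uU2 {v : M.U2} :
    teamCom s (uU2 j v ω) = teamCom s ω := rfl

lemma teamCom_uUa {v : M.Ua} (hs : s ≤ j) (hj : j < M.T) :
    teamCom s (uUa j v ω) = teamCom s ω := by
  unfold teamCom; rw [pre_uUa hs hj]; all_goals rfl

lemma teamComP_uX0 {v : M.X0} (hs : s < j) (hj : j < M.T) :
    teamComP s (uX0 j v ω) = teamComP s ω := by
  unfold teamComP; rw [pre_uX0 hs hj]; all_goals rfl

lemma teamComP_uX1 {v : M.X1} :
    teamComP s (uX1 j v ω) = teamComP s ω := rfl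

lemma teamComP_uX2 {v : M.X2} :
    teamComP s (uX2 j v ω) = teamComP s ω := rfl

lemma teamComP_uM1 {v : Bool} (hs : s < j) (hj : j < M.T) :
    teamComP s (uM1 j v ω) = teamComP s ω := by
  unfold teamComP; rw [pre_uM1 hs hj]; all_goals rfl

lemma teamComP_uM2 {v : Bool} (hs : s < j) (hj : j < M.T) :
    teamComP s (uM2 j v ω) = teamComP s ω := by
  unfold teamComP; rw [pre_uM2 hs hj]; all_goals rfl

lemma teamComP_uZ {v : Option (M.X1 × M.X2)} (hs : s < j) (hj : j < M.T) :
    teamComP s (uZ j v ω) = teamComP s ω := by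
  unfold teamComP; rw [pre_uZ hs hj]; all_goals rfl

lemma teamComP_uY {v : M.Y} (hs : s < j) (hj : j < M.T) :
    teamComP s (uY j v ω) = teamComP s ω := by
  unfold teamComP; rw [pre_uY hs hj]; all_goals rfl

lemma teamComP_uU1 {v : M.U1} :
    teamComP s (uU1 j v ω) = teamComP s ω := rfl

lemma teamComP_uU2 {v : M.U2} :
    teamComP s (uU2 j v ω) = teamComP s ω := rfl

lemma teamComP_uUa {v : M.Ua} (hs : s ≤ j) (hj : j < M.T) :
    teamComP s (uUa j v ω) = teamComP s ω := by
  unfold teamComP; rw [pre_uUa hs hj]; all_goals rfl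

end Lemma3Infra2

section Lemma3Infra3
variable {M : Model}

noncomputable def fF1 (σ : TeamStrategy M) (s : ℕ) (ω : Traj M) : ℝ :=
  σ.f1 s (info1 s ω) (M1v ω s)
noncomputable def fF2 (σ : TeamStrategy M) (s : ℕ) (ω : Traj M) : ℝ :=
  σ.f2 s (info2 s ω) (M2v ω s)
noncomputable def fZv (s : ℕ) (ω : Traj M) : ℝ :=
  zKer M (X0v ω s) (Mv ω s) (X1v ω s, X2v ω s) (Zv ω s)
noncomputable def fYv (s : ℕ) (ω : Traj M) : ℝ :=
  M.obs (Zv ω s) (Mv ω s) (X0v ω s) (Yv ω s)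
noncomputable def fG1 (σ : TeamStrategy M) (s : ℕ) (ω : Traj M) : ℝ :=
  σ.g1 s (info1p s ω) (U1v ω s)
noncomputable def fG2 (σ : TeamStrategy M) (s : ℕ) (ω : Traj M) : ℝ :=
  σ.g2 s (info2p s ω) (U2v ω s)
noncomputable def fGa (γ : AdvStrategy M (HistC M)) (s : ℕ) (ω : Traj M) : ℝ :=
  γ.ga s (teamComP s ω) (UAv ω s)
noncomputable def fT0 (s : ℕ) (ω : Traj M) : ℝ :=
  M.trans0 (X0v ω s) (UAv ω s) (X0v ω (s+1))
noncomputable def fT1 (s : ℕ) (ω : Traj M) : ℝ :=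
  M.trans1 (X0v ω s) (X1v ω s) (U1v ω s) (X1v ω (s+1))
noncomputable def fT2 (s : ℕ) (ω : Traj M) : ℝ :=
  M.trans2 (X0v ω s) (X2v ω s) (U2v ω s) (X2v ω (s+1))
noncomputable def fTr (s : ℕ) (ω : Traj M) : ℝ :=
  if s + 1 < M.T then fT0 s ω * fT1 s ω * fT2 s ω else 1
noncomputable def init3 (ω : Traj M) : ℝ :=
  M.init0 (X0v ω 0) * M.init1 (X1v ω 0) * M.init2 (X2v ω 0)

variable {σ : TeamStrategy M} {γ : AdvStrategy M (HistC M)} {s j : ℕ} {ω : Traj M}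

lemma fF1_uX0 {v : M.X0} (hs : s < j) (hj : j < M.T) :
    fF1 σ s (uX0 j v ω) = fF1 σ s ω := by
  unfold fF1; rw [info1_uX0 hs hj]; all_goals rfl

lemma fF1_uX1 {v : M.X1} (hs : s < j) (hj : j < M.T) :
    fF1 σ s (uX1 j v ω) = fF1 σ s ω := by
  unfold fF1; rw [info1_uX1 hs hj]; all_goals rfl

lemma fF1_uX2 {v : M.X2} :
    fF1 σ s (uX2 j v ω) = fF1 σ s ω := rfl

lemma fF1_uM1 {v : Bool} (hs : s < j) (hj : j < M.T) :
    fF1 σ s (uM1 j v ω) = fF1 σ s ω := by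
  unfold fF1; rw [info1_uM1 (le_of_lt hs) hj, M1v_u hs hj]; all_goals rfl

lemma fF1_uM2 {v : Bool} (hs : s ≤ j) (hj : j < M.T) :
    fF1 σ s (uM2 j v ω) = fF1 σ s ω := by
  unfold fF1; rw [info1_uM2 hs hj]; all_goals rfl

lemma fF1_uZ {v : Option (M.X1 × M.X2)} (hs : s ≤ j) (hj : j < M.T) :
    fF1 σ s (uZ j v ω) = fF1 σ s ω := by
  unfold fF1; rw [info1_uZ hs hj]; all_goals rfl

lemma fF1_uY {v : M.Y} (hs : s ≤ j) (hj : j < M.T) :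
    fF1 σ s (uY j v ω) = fF1 σ s ω := by
  unfold fF1; rw [info1_uY hs hj]; all_goals rfl

lemma fF1_uU1 {v : M.U1} (hs : s ≤ j) (hj : j < M.T) :
    fF1 σ s (uU1 j v ω) = fF1 σ s ω := by
  unfold fF1; rw [info1_uU1 hs hj]; all_goals rfl

lemma fF1_uU2 {v : M.U2} :
    fF1 σ s (uU2 j v ω) = fF1 σ s ω := rfl

lemma fF1_uUa {v : M.Ua} (hs : s ≤ j) (hj : j < M.T) :
    fF1 σ s (uUa j v ω) = fF1 σ s ω := by
  unfold fF1; rw [info1_uUa hs hj]; all_goals rfl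

lemma fF2_uX0 {v : M.X0} (hs : s < j) (hj : j < M.T) :
    fF2 σ s (uX0 j v ω) = fF2 σ s ω := by
  unfold fF2; rw [info2_uX0 hs hj]; all_goals rfl

lemma fF2_uX2 {v : M.X2} (hs : s < j) (hj : j < M.T) :
    fF2 σ s (uX2 j v ω) = fF2 σ s ω := by
  unfold fF2; rw [info2_uX2 hs hj]; all_goals rfl

lemma fF2_uX1 {v : M.X1} :
    fF2 σ s (uX1 j v ω) = fF2 σ s ω := rfl

lemma fF2_uM2 {v : Bool} (hs : s < j) (hj : j < M.T) :
    fF2 σ s (uM2 j v ω) = fF2 σ s ω := by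
  unfold fF2; rw [info2_uM2 (le_of_lt hs) hj, M2v_u hs hj]; all_goals rfl

lemma fF2_uM1 {v : Bool} (hs : s ≤ j) (hj : j < M.T) :
    fF2 σ s (uM1 j v ω) = fF2 σ s ω := by
  unfold fF2; rw [info2_uM1 hs hj]; all_goals rfl

lemma fF2_uZ {v : Option (M.X1 × M.X2)} (hs : s ≤ j) (hj : j < M.T) :
    fF2 σ s (uZ j v ω) = fF2 σ s ω := by
  unfold fF2; rw [info2_uZ hs hj]; all_goals rfl

lemma fF2_uY {v : M.Y} (hs : s ≤ j) (hj : j < M.T) :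
    fF2 σ s (uY j v ω) = fF2 σ s ω := by
  unfold fF2; rw [info2_uY hs hj]; all_goals rfl

lemma fF2_uU2 {v : M.U2} (hs : s ≤ j) (hj : j < M.T) :
    fF2 σ s (uU2 j v ω) = fF2 σ s ω := by
  unfold fF2; rw [info2_uU2 hs hj]; all_goals rfl

lemma fF2_uU1 {v : M.U1} :
    fF2 σ s (uU1 j v ω) = fF2 σ s ω := rfl

lemma fF2_uUa {v : M.Ua} (hs : s ≤ j) (hj : j < M.T) :
    fF2 σ s (uUa j v ω) = fF2 σ s ω := by
  unfold fF2; rw [info2_uUa hs hj]; all_goals rfl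

lemma fZv_uX0 {v : M.X0} (hs : s < j) (hj : j < M.T) :
    fZv s (uX0 j v ω) = fZv s ω := by
  unfold fZv; rw [X0v_u hs hj]; all_goals rfl

lemma fZv_uX1 {v : M.X1} (hs : s < j) (hj : j < M.T) :
    fZv s (uX1 j v ω) = fZv s ω := by
  unfold fZv; rw [X1v_u hs hj]; all_goals rfl

lemma fZv_uX2 {v : M.X2} (hs : s < j) (hj : j < M.T) :
    fZv s (uX2 j v ω) = fZv s ω := by
  unfold fZv; rw [X2v_u hs hj]; all_goals rfl

lemma fZv_uM1 {v : Bool} (hs : s < j) (hj : j < M.T) :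
    fZv s (uM1 j v ω) = fZv s ω := by
  unfold fZv; rw [Mv_uM1 hs hj]; all_goals rfl

lemma fZv_uM2 {v : Bool} (hs : s < j) (hj : j < M.T) :
    fZv s (uM2 j v ω) = fZv s ω := by
  unfold fZv; rw [Mv_uM2 hs hj]; all_goals rfl

lemma fZv_uZ {v : Option (M.X1 × M.X2)} (hs : s < j) (hj : j < M.T) :
    fZv s (uZ j v ω) = fZv s ω := by
  unfold fZv; rw [Zv_u hs hj]; all_goals rfl

lemma fZv_uY {v : M.Y} :
    fZv s (uY j v ω) = fZv s ω := rfl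

lemma fZv_uU1 {v : M.U1} :
    fZv s (uU1 j v ω) = fZv s ω := rfl

lemma fZv_uU2 {v : M.U2} :
    fZv s (uU2 j v ω) = fZv s ω := rfl

lemma fZv_uUa {v : M.Ua} :
    fZv s (uUa j v ω) = fZv s ω := rfl

lemma fYv_uX0 {v : M.X0} (hs : s < j) (hj : j < M.T) :
    fYv s (uX0 j v ω) = fYv s ω := by
  unfold fYv; rw [X0v_u hs hj]; all_goals rfl

lemma fYv_uM1 {v : Bool} (hs : s < j) (hj : j < M.T) :
    fYv s (uM1 j v ω) = fYv s ω := by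
  unfold fYv; rw [Mv_uM1 hs hj]; all_goals rfl

lemma fYv_uM2 {v : Bool} (hs : s < j) (hj : j < M.T) :
    fYv s (uM2 j v ω) = fYv s ω := by
  unfold fYv; rw [Mv_uM2 hs hj]; all_goals rfl

lemma fYv_uZ {v : Option (M.X1 × M.X2)} (hs : s < j) (hj : j < M.T) :
    fYv s (uZ j v ω) = fYv s ω := by
  unfold fYv; rw [Zv_u hs hj]; all_goals rfl

lemma fYv_uY {v : M.Y} (hs : s < j) (hj : j < M.T) :
    fYv s (uY j v ω) = fYv s ω := by
  unfold fYv; rw [Yv_u hs hj]; all_goals rfl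

lemma fYv_uX1 {v : M.X1} :
    fYv s (uX1 j v ω) = fYv s ω := rfl

lemma fYv_uX2 {v : M.X2} :
    fYv s (uX2 j v ω) = fYv s ω := rfl

lemma fYv_uU1 {v : M.U1} :
    fYv s (uU1 j v ω) = fYv s ω := rfl

lemma fYv_uU2 {v : M.U2} :
    fYv s (uU2 j v ω) = fYv s ω := rfl

lemma fYv_uUa {v : M.Ua} :
    fYv s (uUa j v ω) = fYv s ω := rfl

lemma fG1_uX0 {v : M.X0} (hs : s < j) (hj : j < M.T) :
    fG1 σ s (uX0 j v ω) = fG1 σ s ω := by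
  unfold fG1; rw [info1p_uX0 hs hj]; all_goals rfl

lemma fG1_uX1 {v : M.X1} (hs : s < j) (hj : j < M.T) :
    fG1 σ s (uX1 j v ω) = fG1 σ s ω := by
  unfold fG1; rw [info1p_uX1 hs hj]; all_goals rfl

lemma fG1_uX2 {v : M.X2} :
    fG1 σ s (uX2 j v ω) = fG1 σ s ω := rfl

lemma fG1_uM1 {v : Bool} (hs : s < j) (hj : j < M.T) :
    fG1 σ s (uM1 j v ω) = fG1 σ s ω := by
  unfold fG1; rw [info1p_uM1 hs hj]; all_goals rfl

lemma fG1_uM2 {v : Bool} (hs : s < j) (hj : j < M.T) :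
    fG1 σ s (uM2 j v ω) = fG1 σ s ω := by
  unfold fG1; rw [info1p_uM2 hs hj]; all_goals rfl

lemma fG1_uZ {v : Option (M.X1 × M.X2)} (hs : s < j) (hj : j < M.T) :
    fG1 σ s (uZ j v ω) = fG1 σ s ω := by
  unfold fG1; rw [info1p_uZ hs hj]; all_goals rfl

lemma fG1_uY {v : M.Y} (hs : s < j) (hj : j < M.T) :
    fG1 σ s (uY j v ω) = fG1 σ s ω := by
  unfold fG1; rw [info1p_uY hs hj]; all_goals rfl

lemma fG1_uU1 {v : M.U1} (hs : s < j) (hj : j < M.T) :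
    fG1 σ s (uU1 j v ω) = fG1 σ s ω := by
  unfold fG1; rw [info1p_uU1 (le_of_lt hs) hj, U1v_u hs hj]; all_goals rfl

lemma fG1_uU2 {v : M.U2} :
    fG1 σ s (uU2 j v ω) = fG1 σ s ω := rfl

lemma fG1_uUa {v : M.Ua} (hs : s ≤ j) (hj : j < M.T) :
    fG1 σ s (uUa j v ω) = fG1 σ s ω := by
  unfold fG1; rw [info1p_uUa hs hj]; all_goals rfl

lemma fG2_uX0 {v : M.X0} (hs : s < j) (hj : j < M.T) :
    fG2 σ s (uX0 j v ω) = fG2 σ s ω := by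
  unfold fG2; rw [info2p_uX0 hs hj]; all_goals rfl

lemma fG2_uX2 {v : M.X2} (hs : s < j) (hj : j < M.T) :
    fG2 σ s (uX2 j v ω) = fG2 σ s ω := by
  unfold fG2; rw [info2p_uX2 hs hj]; all_goals rfl

lemma fG2_uX1 {v : M.X1} :
    fG2 σ s (uX1 j v ω) = fG2 σ s ω := rfl

lemma fG2_uM1 {v : Bool} (hs : s < j) (hj : j < M.T) :
    fG2 σ s (uM1 j v ω) = fG2 σ s ω := by
  unfold fG2; rw [info2p_uM1 hs hj]; all_goals rfl

lemma fG2_uM2 {v : Bool} (hs : s < j) (hj : j < M.T) :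
    fG2 σ s (uM2 j v ω) = fG2 σ s ω := by
  unfold fG2; rw [info2p_uM2 hs hj]; all_goals rfl

lemma fG2_uZ {v : Option (M.X1 × M.X2)} (hs : s < j) (hj : j < M.T) :
    fG2 σ s (uZ j v ω) = fG2 σ s ω := by
  unfold fG2; rw [info2p_uZ hs hj]; all_goals rfl

lemma fG2_uY {v : M.Y} (hs : s < j) (hj : j < M.T) :
    fG2 σ s (uY j v ω) = fG2 σ s ω := by
  unfold fG2; rw [info2p_uY hs hj]; all_goals rfl

lemma fG2_uU2 {v : M.U2} (hs : s < j) (hj : j < M.T) :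
    fG2 σ s (uU2 j v ω) = fG2 σ s ω := by
  unfold fG2; rw [info2p_uU2 (le_of_lt hs) hj, U2v_u hs hj]; all_goals rfl

lemma fG2_uU1 {v : M.U1} :
    fG2 σ s (uU1 j v ω) = fG2 σ s ω := rfl

lemma fG2_uUa {v : M.Ua} (hs : s ≤ j) (hj : j < M.T) :
    fG2 σ s (uUa j v ω) = fG2 σ s ω := by
  unfold fG2; rw [info2p_uUa hs hj]; all_goals rfl

lemma fGa_uX0 {v : M.X0} (hs : s < j) (hj : j < M.T) :
    fGa γ s (uX0 j v ω) = fGa γ s ω := by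
  unfold fGa; rw [teamComP_uX0 hs hj]; all_goals rfl

lemma fGa_uM1 {v : Bool} (hs : s < j) (hj : j < M.T) :
    fGa γ s (uM1 j v ω) = fGa γ s ω := by
  unfold fGa; rw [teamComP_uM1 hs hj]; all_goals rfl

lemma fGa_uM2 {v : Bool} (hs : s < j) (hj : j < M.T) :
    fGa γ s (uM2 j v ω) = fGa γ s ω := by
  unfold fGa; rw [teamComP_uM2 hs hj]; all_goals rfl

lemma fGa_uZ {v : Option (M.X1 × M.X2)} (hs : s < j) (hj : j < M.T) :
    fGa γ s (uZ j v ω) = fGa γ s ω := by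
  unfold fGa; rw [teamComP_uZ hs hj]; all_goals rfl

lemma fGa_uY {v : M.Y} (hs : s < j) (hj : j < M.T) :
    fGa γ s (uY j v ω) = fGa γ s ω := by
  unfold fGa; rw [teamComP_uY hs hj]; all_goals rfl

lemma fGa_uUa {v : M.Ua} (hs : s < j) (hj : j < M.T) :
    fGa γ s (uUa j v ω) = fGa γ s ω := by
  unfold fGa; rw [teamComP_uUa (le_of_lt hs) hj, UAv_u hs hj]; all_goals rfl

lemma fGa_uX1 {v : M.X1} :
    fGa γ s (uX1 j v ω) = fGa γ s ω := rfl

lemma fGa_uX2 {v : M.X2} :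
    fGa γ s (uX2 j v ω) = fGa γ s ω := rfl

lemma fGa_uU1 {v : M.U1} :
    fGa γ s (uU1 j v ω) = fGa γ s ω := rfl

lemma fGa_uU2 {v : M.U2} :
    fGa γ s (uU2 j v ω) = fGa γ s ω := rfl

lemma fT0_uX0 {v : M.X0} (hs : s + 1 < j) (hj : j < M.T) :
    fT0 s (uX0 j v ω) = fT0 s ω := by
  unfold fT0; rw [X0v_u (r := s) (by omega) hj, X0v_u (r := s+1) hs hj]; all_goals rfl

lemma fT0_uUa {v : M.Ua} (hs : s < j) (hj : j < M.T) :
    fT0 s (uUa j v ω) = fT0 s ω := by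
  unfold fT0; rw [UAv_u hs hj]; all_goals rfl

lemma fT0_uX1 {v : M.X1} :
    fT0 s (uX1 j v ω) = fT0 s ω := rfl

lemma fT0_uX2 {v : M.X2} :
    fT0 s (uX2 j v ω) = fT0 s ω := rfl

lemma fT0_uM1 {v : Bool} :
    fT0 s (uM1 j v ω) = fT0 s ω := rfl

lemma fT0_uM2 {v : Bool} :
    fT0 s (uM2 j v ω) = fT0 s ω := rfl

lemma fT0_uZ {v : Option (M.X1 × M.X2)} :
    fT0 s (uZ j v ω) = fT0 s ω := rfl

lemma fT0_uY {v : M.Y} :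
    fT0 s (uY j v ω) = fT0 s ω := rfl

lemma fT0_uU1 {v : M.U1} :
    fT0 s (uU1 j v ω) = fT0 s ω := rfl

lemma fT0_uU2 {v : M.U2} :
    fT0 s (uU2 j v ω) = fT0 s ω := rfl

lemma fT1_uX0 {v : M.X0} (hs : s < j) (hj : j < M.T) :
    fT1 s (uX0 j v ω) = fT1 s ω := by
  unfold fT1; rw [X0v_u hs hj]; all_goals rfl

lemma fT1_uX1 {v : M.X1} (hs : s + 1 < j) (hj : j < M.T) :
    fT1 s (uX1 j v ω) = fT1 s ω := by
  unfold fT1; rw [X1v_u (r := s) (by omega) hj, X1v_u (r := s+1) hs hj]; all_goals rfl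

lemma fT1_uU1 {v : M.U1} (hs : s < j) (hj : j < M.T) :
    fT1 s (uU1 j v ω) = fT1 s ω := by
  unfold fT1; rw [U1v_u hs hj]; all_goals rfl

lemma fT1_uX2 {v : M.X2} :
    fT1 s (uX2 j v ω) = fT1 s ω := rfl

lemma fT1_uM1 {v : Bool} :
    fT1 s (uM1 j v ω) = fT1 s ω := rfl

lemma fT1_uM2 {v : Bool} :
    fT1 s (uM2 j v ω) = fT1 s ω := rfl

lemma fT1_uZ {v : Option (M.X1 × M.X2)} :
    fT1 s (uZ j v ω) = fT1 s ω := rfl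

lemma fT1_uY {v : M.Y} :
    fT1 s (uY j v ω) = fT1 s ω := rfl

lemma fT1_uU2 {v : M.U2} :
    fT1 s (uU2 j v ω) = fT1 s ω := rfl

lemma fT1_uUa {v : M.Ua} :
    fT1 s (uUa j v ω) = fT1 s ω := rfl

lemma fT2_uX0 {v : M.X0} (hs : s < j) (hj : j < M.T) :
    fT2 s (uX0 j v ω) = fT2 s ω := by
  unfold fT2; rw [X0v_u hs hj]; all_goals rfl

lemma fT2_uX2 {v : M.X2} (hs : s + 1 < j) (hj : j < M.T) :
    fT2 s (uX2 j v ω) = fT2 s ω := by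
  unfold fT2; rw [X2v_u (r := s) (by omega) hj, X2v_u (r := s+1) hs hj]; all_goals rfl

lemma fT2_uU2 {v : M.U2} (hs : s < j) (hj : j < M.T) :
    fT2 s (uU2 j v ω) = fT2 s ω := by
  unfold fT2; rw [U2v_u hs hj]; all_goals rfl

lemma fT2_uX1 {v : M.X1} :
    fT2 s (uX1 j v ω) = fT2 s ω := rfl

lemma fT2_uM1 {v : Bool} :
    fT2 s (uM1 j v ω) = fT2 s ω := rfl

lemma fT2_uM2 {v : Bool} :
    fT2 s (uM2 j v ω) = fT2 s ω := rfl

lemma fT2_uZ {v : Option (M.X1 × M.X2)} :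
    fT2 s (uZ j v ω) = fT2 s ω := rfl

lemma fT2_uY {v : M.Y} :
    fT2 s (uY j v ω) = fT2 s ω := rfl

lemma fT2_uU1 {v : M.U1} :
    fT2 s (uU1 j v ω) = fT2 s ω := rfl

lemma fT2_uUa {v : M.Ua} :
    fT2 s (uUa j v ω) = fT2 s ω := rfl

lemma fTr_uX0 {v : M.X0} (hs : s + 1 < j) (hj : j < M.T) :
    fTr s (uX0 j v ω) = fTr s ω := by
  unfold fTr; rw [fT0_uX0 hs hj, fT1_uX0 (by omega) hj, fT2_uX0 (by omega) hj]; all_goals rfl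

lemma fTr_uX1 {v : M.X1} (hs : s + 1 < j) (hj : j < M.T) :
    fTr s (uX1 j v ω) = fTr s ω := by
  unfold fTr; rw [fT1_uX1 hs hj]; all_goals rfl

lemma fTr_uX2 {v : M.X2} (hs : s + 1 < j) (hj : j < M.T) :
    fTr s (uX2 j v ω) = fTr s ω := by
  unfold fTr; rw [fT2_uX2 hs hj]; all_goals rfl

lemma fTr_uU1 {v : M.U1} (hs : s < j) (hj : j < M.T) :
    fTr s (uU1 j v ω) = fTr s ω := by
  unfold fTr; rw [fT1_uU1 hs hj]; all_goals rfl

lemma fTr_uU2 {v : M.U2} (hs : s < j) (hj : j < M.T) :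
    fTr s (uU2 j v ω) = fTr s ω := by
  unfold fTr; rw [fT2_uU2 hs hj]; all_goals rfl

lemma fTr_uUa {v : M.Ua} (hs : s < j) (hj : j < M.T) :
    fTr s (uUa j v ω) = fTr s ω := by
  unfold fTr; rw [fT0_uUa hs hj]; all_goals rfl

lemma fTr_uM1 {v : Bool} :
    fTr s (uM1 j v ω) = fTr s ω := rfl

lemma fTr_uM2 {v : Bool} :
    fTr s (uM2 j v ω) = fTr s ω := rfl

lemma fTr_uZ {v : Option (M.X1 × M.X2)} :
    fTr s (uZ j v ω) = fTr s ω := rfl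

lemma fTr_uY {v : M.Y} :
    fTr s (uY j v ω) = fTr s ω := rfl

lemma init3_uX0 {v : M.X0} (h0 : 0 < j) (hj : j < M.T) :
    init3 (M := M) (uX0 j v ω) = init3 (M := M) ω := by
  unfold init3; rw [X0v_u h0 hj]; all_goals rfl

lemma init3_uX1 {v : M.X1} (h0 : 0 < j) (hj : j < M.T) :
    init3 (M := M) (uX1 j v ω) = init3 (M := M) ω := by
  unfold init3; rw [X1v_u h0 hj]; all_goals rfl

lemma init3_uX2 {v : M.X2} (h0 : 0 < j) (hj : j < M.T) :
    init3 (M := M) (uX2 j v ω) = init3 (M := M) ω := by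
  unfold init3; rw [X2v_u h0 hj]; all_goals rfl

lemma init3_uM1 {v : Bool} :
    init3 (M := M) (uM1 j v ω) = init3 (M := M) ω := rfl

lemma init3_uM2 {v : Bool} :
    init3 (M := M) (uM2 j v ω) = init3 (M := M) ω := rfl

lemma init3_uZ {v : Option (M.X1 × M.X2)} :
    init3 (M := M) (uZ j v ω) = init3 (M := M) ω := rfl

lemma init3_uY {v : M.Y} :
    init3 (M := M) (uY j v ω) = init3 (M := M) ω := rfl

lemma init3_uU1 {v : M.U1} :
    init3 (M := M) (uU1 j v ω) = init3 (M := M) ω := rfl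

lemma init3_uU2 {v : M.U2} :
    init3 (M := M) (uU2 j v ω) = init3 (M := M) ω := rfl

lemma init3_uUa {v : M.Ua} :
    init3 (M := M) (uUa j v ω) = init3 (M := M) ω := rfl


lemma fF1_eval {v : Bool} (hs : s < M.T) :
    fF1 σ s (uM1 s v ω) = σ.f1 s (info1 s ω) v := by
  unfold fF1; rw [info1_uM1 (le_refl s) hs, M1v_u_self]
lemma fF2_eval {v : Bool} (hs : s < M.T) :
    fF2 σ s (uM2 s v ω) = σ.f2 s (info2 s ω) v := by
  unfold fF2; rw [info2_uM2 (le_refl s) hs, M2v_u_self]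
lemma fZv_eval {v : Option (M.X1 × M.X2)} :
    fZv s (uZ s v ω) = zKer M (X0v ω s) (Mv ω s) (X1v ω s, X2v ω s) v := by
  unfold fZv; rw [Zv_u_self]; all_goals rfl
lemma fYv_eval {v : M.Y} :
    fYv s (uY s v ω) = M.obs (Zv ω s) (Mv ω s) (X0v ω s) v := by
  unfold fYv; rw [Yv_u_self]; all_goals rfl
lemma fG1_eval {v : M.U1} (hs : s < M.T) :
    fG1 σ s (uU1 s v ω) = σ.g1 s (info1p s ω) v := by
  unfold fG1; rw [info1p_uU1 (le_refl s) hs, U1v_u_self]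
lemma fG2_eval {v : M.U2} (hs : s < M.T) :
    fG2 σ s (uU2 s v ω) = σ.g2 s (info2p s ω) v := by
  unfold fG2; rw [info2p_uU2 (le_refl s) hs, U2v_u_self]
lemma fGa_eval {v : M.Ua} (hs : s < M.T) :
    fGa γ s (uUa s v ω) = γ.ga s (teamComP s ω) v := by
  unfold fGa; rw [teamComP_uUa (le_refl s) hs, UAv_u_self]
lemma fT0_eval {v : M.X0} (hs : s < s+1) (hj : s+1 < M.T) :
    fT0 s (uX0 (s+1) v ω) = M.trans0 (X0v ω s) (UAv ω s) v := by
  unfold fT0; rw [X0v_u hs hj, X0v_u_self]; all_goals rfl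
lemma fT1_eval {v : M.X1} (hs : s < s+1) (hj : s+1 < M.T) :
    fT1 s (uX1 (s+1) v ω) = M.trans1 (X0v ω s) (X1v ω s) (U1v ω s) v := by
  unfold fT1; rw [X1v_u hs hj, X1v_u_self]; all_goals rfl
lemma fT2_eval {v : M.X2} (hs : s < s+1) (hj : s+1 < M.T) :
    fT2 s (uX2 (s+1) v ω) = M.trans2 (X0v ω s) (X2v ω s) (U2v ω s) v := by
  unfold fT2; rw [X2v_u hs hj, X2v_u_self]; all_goals rfl

end Lemma3Infra3

section Lemma3Infra4
variable {M : Model}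

set_option maxHeartbeats 2000000 in
/-- Generic "integrate out one coordinate" lemma. -/
lemma elim_gen {β : Type} [Fintype β] [Nonempty β]
    (upd : β → Traj M → Traj M) (prj : Traj M → β)
    (h1 : ∀ v ω, prj (upd v ω) = v)
    (h2 : ∀ ω, upd (prj ω) ω = ω)
    (h3 : ∀ v v' ω, upd v (upd v' ω) = upd v ω)
    (G K : Traj M → ℝ) (hG : ∀ v ω, G (upd v ω) = G ω)
    (hK : ∀ ω, ∑ v, K (upd v ω) = 1) :
    ∑ ω, G ω * K ω = ((Fintype.card β : ℝ))⁻¹ * ∑ ω, G ω := by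
  have key : ∀ H : Traj M → ℝ,
      (∑ ω, ∑ v, H (upd v ω)) = (Fintype.card β : ℝ) * ∑ ω, H ω := by
    intro H
    have hinv : Function.Involutive (fun p : Traj M × β => (upd p.2 p.1, prj p.1)) := by
      rintro ⟨ω, v⟩
      show (upd (prj ω) (upd v ω), prj (upd v ω)) = (ω, v)
      rw [h3, h2, h1]
    have e1 := Fintype.sum_bijective _ hinv.bijective
      (fun p : Traj M × β => H (upd p.2 p.1)) (fun p : Traj M × β => H p.1)
      (fun p => rfl)
    have A : ∑ p : Traj M × β, H (upd p.2 p.1) = ∑ ω : Traj M, ∑ v : β, H (upd v ω) :=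
      Fintype.sum_prod_type _
    have B : ∑ p : Traj M × β, H p.1 = ∑ ω : Traj M, ∑ v : β, H ω :=
      Fintype.sum_prod_type _
    calc ∑ ω, ∑ v, H (upd v ω) = ∑ p : Traj M × β, H (upd p.2 p.1) := A.symm
      _ = ∑ p : Traj M × β, H p.1 := e1
      _ = ∑ ω : Traj M, ∑ _v : β, H ω := B
      _ = (Fintype.card β : ℝ) * ∑ ω, H ω := by
          simp [Finset.sum_const, Finset.card_univ, nsmul_eq_mul, Finset.mul_sum]
  have hcard : (Fintype.card β : ℝ) ≠ 0 := Nat.cast_ne_zero.mpr Fintype.card_ne_zero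
  calc ∑ ω, G ω * K ω
      = ((Fintype.card β : ℝ))⁻¹ * ∑ ω, ∑ v, (G (upd v ω) * K (upd v ω)) := by
        rw [key (fun ω => G ω * K ω), inv_mul_cancel_left₀ hcard]
    _ = ((Fintype.card β : ℝ))⁻¹ * ∑ ω, G ω := by
        congr 1
        refine Finset.sum_congr rfl fun ω _ => ?_
        simp only [hG]
        rw [← Finset.mul_sum, hK, mul_one]




lemma elim_uX0 (j : ℕ) (G K : Traj M → ℝ)
    (hG : ∀ (v : M.X0) ω, G (uX0 j v ω) = G ω)
    (hK : ∀ ω, ∑ v : M.X0, K (uX0 j v ω) = 1) :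
    ∑ ω, G ω * K ω = ((Fintype.card (M.X0) : ℝ))⁻¹ * ∑ ω, G ω :=
  elim_gen (uX0 j) (fun ω => X0v ω j)
    (fun v ω => X0v_u_self)
    (fun ω => by simp [uX0, X0v, Function.update_eq_self])
    (fun v v' ω => by simp [uX0, Function.update_idem])
    G K hG hK

lemma elim_uX1 (j : ℕ) (G K : Traj M → ℝ)
    (hG : ∀ (v : M.X1) ω, G (uX1 j v ω) = G ω)
    (hK : ∀ ω, ∑ v : M.X1, K (uX1 j v ω) = 1) :
    ∑ ω, G ω * K ω = ((Fintype.card (M.X1) : ℝ))⁻¹ * ∑ ω, G ω :=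
  elim_gen (uX1 j) (fun ω => X1v ω j)
    (fun v ω => X1v_u_self)
    (fun ω => by simp [uX1, X1v, Function.update_eq_self])
    (fun v v' ω => by simp [uX1, Function.update_idem])
    G K hG hK

lemma elim_uX2 (j : ℕ) (G K : Traj M → ℝ)
    (hG : ∀ (v : M.X2) ω, G (uX2 j v ω) = G ω)
    (hK : ∀ ω, ∑ v : M.X2, K (uX2 j v ω) = 1) :
    ∑ ω, G ω * K ω = ((Fintype.card (M.X2) : ℝ))⁻¹ * ∑ ω, G ω :=
  elim_gen (uX2 j) (fun ω => X2v ω j)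
    (fun v ω => X2v_u_self)
    (fun ω => by simp [uX2, X2v, Function.update_eq_self])
    (fun v v' ω => by simp [uX2, Function.update_idem])
    G K hG hK

lemma elim_uM1 (j : ℕ) (G K : Traj M → ℝ)
    (hG : ∀ (v : Bool) ω, G (uM1 j v ω) = G ω)
    (hK : ∀ ω, ∑ v : Bool, K (uM1 j v ω) = 1) :
    ∑ ω, G ω * K ω = ((Fintype.card (Bool) : ℝ))⁻¹ * ∑ ω, G ω :=
  elim_gen (uM1 j) (fun ω => M1v ω j)
    (fun v ω => M1v_u_self)
    (fun ω => by simp [uM1, M1v, Function.update_eq_self])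
    (fun v v' ω => by simp [uM1, Function.update_idem])
    G K hG hK

lemma elim_uM2 (j : ℕ) (G K : Traj M → ℝ)
    (hG : ∀ (v : Bool) ω, G (uM2 j v ω) = G ω)
    (hK : ∀ ω, ∑ v : Bool, K (uM2 j v ω) = 1) :
    ∑ ω, G ω * K ω = ((Fintype.card (Bool) : ℝ))⁻¹ * ∑ ω, G ω :=
  elim_gen (uM2 j) (fun ω => M2v ω j)
    (fun v ω => M2v_u_self)
    (fun ω => by simp [uM2, M2v, Function.update_eq_self])
    (fun v v' ω => by simp [uM2, Function.update_idem])
    G K hG hK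

lemma elim_uZ (j : ℕ) (G K : Traj M → ℝ)
    (hG : ∀ (v : Option (M.X1 × M.X2)) ω, G (uZ j v ω) = G ω)
    (hK : ∀ ω, ∑ v : Option (M.X1 × M.X2), K (uZ j v ω) = 1) :
    ∑ ω, G ω * K ω = ((Fintype.card (Option (M.X1 × M.X2)) : ℝ))⁻¹ * ∑ ω, G ω :=
  elim_gen (uZ j) (fun ω => Zv ω j)
    (fun v ω => Zv_u_self)
    (fun ω => by simp [uZ, Zv, Function.update_eq_self])
    (fun v v' ω => by simp [uZ, Function.update_idem])
    G K hG hK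

lemma elim_uY (j : ℕ) (G K : Traj M → ℝ)
    (hG : ∀ (v : M.Y) ω, G (uY j v ω) = G ω)
    (hK : ∀ ω, ∑ v : M.Y, K (uY j v ω) = 1) :
    ∑ ω, G ω * K ω = ((Fintype.card (M.Y) : ℝ))⁻¹ * ∑ ω, G ω :=
  elim_gen (uY j) (fun ω => Yv ω j)
    (fun v ω => Yv_u_self)
    (fun ω => by simp [uY, Yv, Function.update_eq_self])
    (fun v v' ω => by simp [uY, Function.update_idem])
    G K hG hK

lemma elim_uU1 (j : ℕ) (G K : Traj M → ℝ)
    (hG : ∀ (v : M.U1) ω, G (uU1 j v ω) = G ω)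
    (hK : ∀ ω, ∑ v : M.U1, K (uU1 j v ω) = 1) :
    ∑ ω, G ω * K ω = ((Fintype.card (M.U1) : ℝ))⁻¹ * ∑ ω, G ω :=
  elim_gen (uU1 j) (fun ω => U1v ω j)
    (fun v ω => U1v_u_self)
    (fun ω => by simp [uU1, U1v, Function.update_eq_self])
    (fun v v' ω => by simp [uU1, Function.update_idem])
    G K hG hK

lemma elim_uU2 (j : ℕ) (G K : Traj M → ℝ)
    (hG : ∀ (v : M.U2) ω, G (uU2 j v ω) = G ω)
    (hK : ∀ ω, ∑ v : M.U2, K (uU2 j v ω) = 1) :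
    ∑ ω, G ω * K ω = ((Fintype.card (M.U2) : ℝ))⁻¹ * ∑ ω, G ω :=
  elim_gen (uU2 j) (fun ω => U2v ω j)
    (fun v ω => U2v_u_self)
    (fun ω => by simp [uU2, U2v, Function.update_eq_self])
    (fun v v' ω => by simp [uU2, Function.update_idem])
    G K hG hK

lemma elim_uUa (j : ℕ) (G K : Traj M → ℝ)
    (hG : ∀ (v : M.Ua) ω, G (uUa j v ω) = G ω)
    (hK : ∀ ω, ∑ v : M.Ua, K (uUa j v ω) = 1) :
    ∑ ω, G ω * K ω = ((Fintype.card (M.Ua) : ℝ))⁻¹ * ∑ ω, G ω :=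
  elim_gen (uUa j) (fun ω => UAv ω j)
    (fun v ω => UAv_u_self)
    (fun ω => by simp [uUa, UAv, Function.update_eq_self])
    (fun v v' ω => by simp [uUa, Function.update_idem])
    G K hG hK


/-- Invariance of a function of trajectories with respect to coordinates at or beyond a cutoff. -/
structure Inv (M : Model) (s : ℕ) (φ : Traj M → ℝ) : Prop where
  hx0 : ∀ j, s < j → j < M.T → ∀ (v : M.X0) ω, φ (uX0 j v ω) = φ ω
  hx1 : ∀ j, s < j → j < M.T → ∀ (v : M.X1) ω, φ (uX1 j v ω) = φ ω
  hx2 : ∀ j, s < j → j < M.T → ∀ (v : M.X2) ω, φ (uX2 j v ω) = φ ω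
  hm1 : ∀ j, s ≤ j → j < M.T → ∀ (v : Bool) ω, φ (uM1 j v ω) = φ ω
  hm2 : ∀ j, s ≤ j → j < M.T → ∀ (v : Bool) ω, φ (uM2 j v ω) = φ ω
  hz : ∀ j, s ≤ j → j < M.T → ∀ (v : Option (M.X1 × M.X2)) ω, φ (uZ j v ω) = φ ω
  hy : ∀ j, s ≤ j → j < M.T → ∀ (v : M.Y) ω, φ (uY j v ω) = φ ω
  hu1 : ∀ j, s ≤ j → j < M.T → ∀ (v : M.U1) ω, φ (uU1 j v ω) = φ ω
  hu2 : ∀ j, s ≤ j → j < M.T → ∀ (v : M.U2) ω, φ (uU2 j v ω) = φ ω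
  hua : ∀ j, s ≤ j → j < M.T → ∀ (v : M.Ua) ω, φ (uUa j v ω) = φ ω

lemma Inv.mono {s s' : ℕ} {φ : Traj M → ℝ} (h : Inv M s φ) (hss : s ≤ s') : Inv M s' φ :=
  ⟨fun j a b => h.hx0 j (lt_of_le_of_lt hss a) b,
   fun j a b => h.hx1 j (lt_of_le_of_lt hss a) b,
   fun j a b => h.hx2 j (lt_of_le_of_lt hss a) b,
   fun j a b => h.hm1 j (le_trans hss a) b,
   fun j a b => h.hm2 j (le_trans hss a) b,
   fun j a b => h.hz j (le_trans hss a) b,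
   fun j a b => h.hy j (le_trans hss a) b,
   fun j a b => h.hu1 j (le_trans hss a) b,
   fun j a b => h.hu2 j (le_trans hss a) b,
   fun j a b => h.hua j (le_trans hss a) b⟩

lemma Inv.mul {s : ℕ} {φ ψ : Traj M → ℝ} (hφ : Inv M s φ) (hψ : Inv M s ψ) :
    Inv M s (fun ω => φ ω * ψ ω) :=
  ⟨fun j a b v ω => by rw [hφ.hx0 j a b, hψ.hx0 j a b],
   fun j a b v ω => by rw [hφ.hx1 j a b, hψ.hx1 j a b],
   fun j a b v ω => by rw [hφ.hx2 j a b, hψ.hx2 j a b],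
   fun j a b v ω => by rw [hφ.hm1 j a b, hψ.hm1 j a b],
   fun j a b v ω => by rw [hφ.hm2 j a b, hψ.hm2 j a b],
   fun j a b v ω => by rw [hφ.hz j a b, hψ.hz j a b],
   fun j a b v ω => by rw [hφ.hy j a b, hψ.hy j a b],
   fun j a b v ω => by rw [hφ.hu1 j a b, hψ.hu1 j a b],
   fun j a b v ω => by rw [hφ.hu2 j a b, hψ.hu2 j a b],
   fun j a b v ω => by rw [hφ.hua j a b, hψ.hua j a b]⟩

noncomputable def stageF (σ : TeamStrategy M) (γ : AdvStrategy M (HistC M)) (s : ℕ)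
    (ω : Traj M) : ℝ :=
  fF1 σ s ω * fF2 σ s ω * fZv s ω * fYv s ω * fG1 σ s ω * fG2 σ s ω * fGa γ s ω

noncomputable def allFac (σ : TeamStrategy M) (γ : AdvStrategy M (HistC M)) (s : ℕ)
    (ω : Traj M) : ℝ :=
  stageF σ γ s ω * fTr s ω

noncomputable def teamStage (σ : TeamStrategy M) (s : ℕ) (ω : Traj M) : ℝ :=
  fF1 σ s ω * fF2 σ s ω * fZv s ω * fYv s ω * fG1 σ s ω * fG2 σ s ω

noncomputable def teamFac (σ : TeamStrategy M) (s : ℕ) (ω : Traj M) : ℝ :=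
  teamStage σ s ω * fTr s ω

variable {σ : TeamStrategy M} {γ : AdvStrategy M (HistC M)} {s : ℕ}

lemma inv_allFac : Inv M (s+1) (allFac σ γ s) := by
  constructor <;> intro j a b v ω <;> unfold allFac stageF fTr
  · rw [fF1_uX0 (by omega) b, fF2_uX0 (by omega) b, fZv_uX0 (by omega) b,
      fYv_uX0 (by omega) b, fG1_uX0 (by omega) b, fG2_uX0 (by omega) b,
      fGa_uX0 (by omega) b, fT0_uX0 (by omega) b, fT1_uX0 (by omega) b, fT2_uX0 (by omega) b]
    all_goals rfl
  · rw [fF1_uX1 (by omega) b, fZv_uX1 (by omega) b, fG1_uX1 (by omega) b,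
      fT1_uX1 (by omega) b]
    all_goals rfl
  · rw [fF2_uX2 (by omega) b, fZv_uX2 (by omega) b, fG2_uX2 (by omega) b,
      fT2_uX2 (by omega) b]
    all_goals rfl
  · rw [fF1_uM1 (by omega) b, fF2_uM1 (by omega) b, fZv_uM1 (by omega) b,
      fYv_uM1 (by omega) b, fG1_uM1 (by omega) b, fG2_uM1 (by omega) b, fGa_uM1 (by omega) b]
    all_goals rfl
  · rw [fF1_uM2 (by omega) b, fF2_uM2 (by omega) b, fZv_uM2 (by omega) b,
      fYv_uM2 (by omega) b, fG1_uM2 (by omega) b, fG2_uM2 (by omega) b, fGa_uM2 (by omega) b]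
    all_goals rfl
  · rw [fF1_uZ (by omega) b, fF2_uZ (by omega) b, fZv_uZ (by omega) b,
      fYv_uZ (by omega) b, fG1_uZ (by omega) b, fG2_uZ (by omega) b, fGa_uZ (by omega) b]
    all_goals rfl
  · rw [fF1_uY (by omega) b, fF2_uY (by omega) b, fYv_uY (by omega) b,
      fG1_uY (by omega) b, fG2_uY (by omega) b, fGa_uY (by omega) b]
    all_goals rfl
  · rw [fF1_uU1 (by omega) b, fG1_uU1 (by omega) b, fT1_uU1 (by omega) b]
    all_goals rfl
  · rw [fF2_uU2 (by omega) b, fG2_uU2 (by omega) b, fT2_uU2 (by omega) b]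
    all_goals rfl
  · rw [fF1_uUa (by omega) b, fF2_uUa (by omega) b, fG1_uUa (by omega) b,
      fG2_uUa (by omega) b, fGa_uUa (by omega) b, fT0_uUa (by omega) b]
    all_goals rfl

lemma inv_teamFac : Inv M (s+1) (teamFac σ s) := by
  constructor <;> intro j a b v ω <;> unfold teamFac teamStage fTr
  · rw [fF1_uX0 (by omega) b, fF2_uX0 (by omega) b, fZv_uX0 (by omega) b,
      fYv_uX0 (by omega) b, fG1_uX0 (by omega) b, fG2_uX0 (by omega) b,
      fT0_uX0 (by omega) b, fT1_uX0 (by omega) b, fT2_uX0 (by omega) b]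
    all_goals rfl
  · rw [fF1_uX1 (by omega) b, fZv_uX1 (by omega) b, fG1_uX1 (by omega) b,
      fT1_uX1 (by omega) b]
    all_goals rfl
  · rw [fF2_uX2 (by omega) b, fZv_uX2 (by omega) b, fG2_uX2 (by omega) b,
      fT2_uX2 (by omega) b]
    all_goals rfl
  · rw [fF1_uM1 (by omega) b, fF2_uM1 (by omega) b, fZv_uM1 (by omega) b,
      fYv_uM1 (by omega) b, fG1_uM1 (by omega) b, fG2_uM1 (by omega) b]
    all_goals rfl
  · rw [fF1_uM2 (by omega) b, fF2_uM2 (by omega) b, fZv_uM2 (by omega) b,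
      fYv_uM2 (by omega) b, fG1_uM2 (by omega) b, fG2_uM2 (by omega) b]
    all_goals rfl
  · rw [fF1_uZ (by omega) b, fF2_uZ (by omega) b, fZv_uZ (by omega) b,
      fYv_uZ (by omega) b, fG1_uZ (by omega) b, fG2_uZ (by omega) b]
    all_goals rfl
  · rw [fF1_uY (by omega) b, fF2_uY (by omega) b, fYv_uY (by omega) b,
      fG1_uY (by omega) b, fG2_uY (by omega) b]
    all_goals rfl
  · rw [fF1_uU1 (by omega) b, fG1_uU1 (by omega) b, fT1_uU1 (by omega) b]
    all_goals rfl
  · rw [fF2_uU2 (by omega) b, fG2_uU2 (by omega) b, fT2_uU2 (by omega) b]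
    all_goals rfl
  · rw [fF1_uUa (by omega) b, fF2_uUa (by omega) b, fG1_uUa (by omega) b,
      fG2_uUa (by omega) b, fT0_uUa (by omega) b]
    all_goals rfl

lemma inv_init3 : Inv M 0 (init3 (M := M)) := by
  constructor <;> intro j a b v ω
  · exact init3_uX0 a b
  · exact init3_uX1 a b
  · exact init3_uX2 a b
  all_goals rfl

lemma inv_prod_allFac : Inv M s (fun ω => ∏ r ∈ Finset.range s, allFac σ γ r ω) := by
  constructor <;> intro j a b v ω <;>
    refine Finset.prod_congr rfl fun r hr => ?_ <;>
    have hrs := Finset.mem_range.mp hr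
  · exact (inv_allFac (s := r)).hx0 j (by omega) b v ω
  · exact (inv_allFac (s := r)).hx1 j (by omega) b v ω
  · exact (inv_allFac (s := r)).hx2 j (by omega) b v ω
  · exact (inv_allFac (s := r)).hm1 j (by omega) b v ω
  · exact (inv_allFac (s := r)).hm2 j (by omega) b v ω
  · exact (inv_allFac (s := r)).hz j (by omega) b v ω
  · exact (inv_allFac (s := r)).hy j (by omega) b v ω
  · exact (inv_allFac (s := r)).hu1 j (by omega) b v ω
  · exact (inv_allFac (s := r)).hu2 j (by omega) b v ω
  · exact (inv_allFac (s := r)).hua j (by omega) b v ω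

lemma inv_prod_teamFac : Inv M s (fun ω => ∏ r ∈ Finset.range s, teamFac σ r ω) := by
  constructor <;> intro j a b v ω <;>
    refine Finset.prod_congr rfl fun r hr => ?_ <;>
    have hrs := Finset.mem_range.mp hr
  · exact (inv_teamFac (s := r)).hx0 j (by omega) b v ω
  · exact (inv_teamFac (s := r)).hx1 j (by omega) b v ω
  · exact (inv_teamFac (s := r)).hx2 j (by omega) b v ω
  · exact (inv_teamFac (s := r)).hm1 j (by omega) b v ω
  · exact (inv_teamFac (s := r)).hm2 j (by omega) b v ω
  · exact (inv_teamFac (s := r)).hz j (by omega) b v ω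
  · exact (inv_teamFac (s := r)).hy j (by omega) b v ω
  · exact (inv_teamFac (s := r)).hu1 j (by omega) b v ω
  · exact (inv_teamFac (s := r)).hu2 j (by omega) b v ω
  · exact (inv_teamFac (s := r)).hua j (by omega) b v ω

lemma zKer_sum (x0 : M.X0) (m : Bool × Bool) (x : M.X1 × M.X2) :
    ∑ z, zKer M x0 m x z = 1 := by
  unfold zKer
  by_cases hm : m = (false, false)
  · simp [hm]
  · simp only [if_neg hm]
    rw [Fintype.sum_option]
    simp [Finset.sum_ite_eq' Finset.univ x (fun _ => 1 - M.pe x0)]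

lemma prob_factor (ω : Traj M) :
    prob σ γ teamComP ω = init3 ω * ∏ r ∈ Finset.range M.T, allFac σ γ r ω := by
  have h1 : ∏ r ∈ Finset.range M.T, fTr r ω =
      ∏ r ∈ Finset.range (M.T - 1),
        (M.trans0 (X0v ω r) (UAv ω r) (X0v ω (r+1)) *
         M.trans1 (X0v ω r) (X1v ω r) (U1v ω r) (X1v ω (r+1)) *
         M.trans2 (X0v ω r) (X2v ω r) (U2v ω r) (X2v ω (r+1))) := by
    have hT : M.T - 1 + 1 = M.T := Nat.succ_pred_eq_of_pos M.hT
    rw [← hT, Finset.prod_range_succ]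
    have hlast : fTr (M.T - 1) ω = 1 := by unfold fTr; rw [if_neg]; omega
    rw [hlast, mul_one]
    refine Finset.prod_congr rfl fun r hr => ?_
    have hrr := Finset.mem_range.mp hr
    unfold fTr fT0 fT1 fT2
    rw [if_pos (by omega)]
  unfold allFac
  rw [Finset.prod_mul_distrib, h1]
  unfold prob stageF fF1 fF2 fZv fYv fG1 fG2 fGa init3
  ring

end Lemma3Infra4


section Lemma3Infra5
variable {M : Model} {σ : TeamStrategy M} {γ : AdvStrategy M (HistC M)} {s : ℕ}

noncomputable def c7 (M : Model) : ℝ :=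
  (Fintype.card M.Ua : ℝ)⁻¹ * ((Fintype.card M.U2 : ℝ)⁻¹ * ((Fintype.card M.U1 : ℝ)⁻¹ *
    ((Fintype.card M.Y : ℝ)⁻¹ * ((Fintype.card (Option (M.X1 × M.X2)) : ℝ)⁻¹ *
      ((Fintype.card Bool : ℝ)⁻¹ * (Fintype.card Bool : ℝ)⁻¹)))))

noncomputable def cX3 (M : Model) : ℝ :=
  (Fintype.card M.X2 : ℝ)⁻¹ * (Fintype.card M.X1 : ℝ)⁻¹ * (Fintype.card M.X0 : ℝ)⁻¹

noncomputable def cFac (M : Model) (s : ℕ) : ℝ :=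
  c7 M * (if s + 1 < M.T then cX3 M else 1)

lemma stage7_elim (hsT : s < M.T) (φ : Traj M → ℝ) (hφ : Inv M s φ) :
    ∑ ω, φ ω * stageF σ γ s ω = c7 M * ∑ ω, φ ω := by
  have step7 : ∑ ω, φ ω * stageF σ γ s ω
      = (Fintype.card M.Ua : ℝ)⁻¹ * ∑ ω, φ ω * teamStage σ s ω := by
    have := elim_uUa s (fun ω => φ ω * teamStage σ s ω) (fun ω => fGa γ s ω)
      (by
        intro v ω
        simp only [teamStage]
        rw [hφ.hua s le_rfl hsT, fF1_uUa le_rfl hsT, fF2_uUa le_rfl hsT,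
          fG1_uUa le_rfl hsT, fG2_uUa le_rfl hsT]
        all_goals rfl)
      (by intro ω; simp only [fGa_eval hsT]; exact γ.ga_sum s _)
    rw [← this]
    refine Finset.sum_congr rfl fun ω _ => ?_
    simp only [stageF, teamStage]; ring
  have step6 : ∑ ω, φ ω * teamStage σ s ω
      = (Fintype.card M.U2 : ℝ)⁻¹ *
        ∑ ω, φ ω * (fF1 σ s ω * fF2 σ s ω * fZv s ω * fYv s ω * fG1 σ s ω) := by
    have := elim_uU2 s
      (fun ω => φ ω * (fF1 σ s ω * fF2 σ s ω * fZv s ω * fYv s ω * fG1 σ s ω))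
      (fun ω => fG2 σ s ω)
      (by
        intro v ω
        rw [hφ.hu2 s le_rfl hsT, fF2_uU2 le_rfl hsT]
        all_goals rfl)
      (by intro ω; simp only [fG2_eval hsT]; exact σ.g2_sum s _)
    rw [← this]
    refine Finset.sum_congr rfl fun ω _ => ?_
    simp only [teamStage]; ring
  have step5 : ∑ ω, φ ω * (fF1 σ s ω * fF2 σ s ω * fZv s ω * fYv s ω * fG1 σ s ω)
      = (Fintype.card M.U1 : ℝ)⁻¹ *
        ∑ ω, φ ω * (fF1 σ s ω * fF2 σ s ω * fZv s ω * fYv s ω) := by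
    have := elim_uU1 s
      (fun ω => φ ω * (fF1 σ s ω * fF2 σ s ω * fZv s ω * fYv s ω))
      (fun ω => fG1 σ s ω)
      (by
        intro v ω
        rw [hφ.hu1 s le_rfl hsT, fF1_uU1 le_rfl hsT]
        all_goals rfl)
      (by intro ω; simp only [fG1_eval hsT]; exact σ.g1_sum s _)
    rw [← this]
    refine Finset.sum_congr rfl fun ω _ => ?_
    ring
  have step4 : ∑ ω, φ ω * (fF1 σ s ω * fF2 σ s ω * fZv s ω * fYv s ω)
      = (Fintype.card M.Y : ℝ)⁻¹ *
        ∑ ω, φ ω * (fF1 σ s ω * fF2 σ s ω * fZv s ω) := by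
    have := elim_uY s
      (fun ω => φ ω * (fF1 σ s ω * fF2 σ s ω * fZv s ω))
      (fun ω => fYv s ω)
      (by
        intro v ω
        rw [hφ.hy s le_rfl hsT, fF1_uY le_rfl hsT, fF2_uY le_rfl hsT]
        all_goals rfl)
      (by intro ω; simp only [fYv_eval]; exact M.obs_sum _ _ _)
    rw [← this]
    refine Finset.sum_congr rfl fun ω _ => ?_
    ring
  have step3 : ∑ ω, φ ω * (fF1 σ s ω * fF2 σ s ω * fZv s ω)
      = (Fintype.card (Option (M.X1 × M.X2)) : ℝ)⁻¹ *
        ∑ ω, φ ω * (fF1 σ s ω * fF2 σ s ω) := by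
    have := elim_uZ s
      (fun ω => φ ω * (fF1 σ s ω * fF2 σ s ω))
      (fun ω => fZv s ω)
      (by
        intro v ω
        rw [hφ.hz s le_rfl hsT, fF1_uZ le_rfl hsT, fF2_uZ le_rfl hsT]
        all_goals rfl)
      (by intro ω; simp only [fZv_eval]; exact zKer_sum _ _ _)
    rw [← this]
    refine Finset.sum_congr rfl fun ω _ => ?_
    ring
  have step2 : ∑ ω, φ ω * (fF1 σ s ω * fF2 σ s ω)
      = (Fintype.card Bool : ℝ)⁻¹ * ∑ ω, φ ω * fF1 σ s ω := by
    have := elim_uM2 s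
      (fun ω => φ ω * fF1 σ s ω)
      (fun ω => fF2 σ s ω)
      (by
        intro v ω
        rw [hφ.hm2 s le_rfl hsT, fF1_uM2 le_rfl hsT]
        all_goals rfl)
      (by intro ω; simp only [fF2_eval hsT]; exact σ.f2_sum s _)
    rw [← this]
    refine Finset.sum_congr rfl fun ω _ => ?_
    ring
  have step1 : ∑ ω, φ ω * fF1 σ s ω = (Fintype.card Bool : ℝ)⁻¹ * ∑ ω, φ ω := by
    exact elim_uM1 s φ (fun ω => fF1 σ s ω)
      (fun v ω => hφ.hm1 s le_rfl hsT v ω)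
      (by intro ω; simp only [fF1_eval hsT]; exact σ.f1_sum s _)
  rw [step7, step6, step5, step4, step3, step2, step1, c7]
  ring

lemma stage_elim (hsT : s < M.T) (φ : Traj M → ℝ) (hφ : Inv M s φ) :
    ∑ ω, φ ω * allFac σ γ s ω = cFac M s * ∑ ω, φ ω := by
  by_cases hnext : s + 1 < M.T
  · have stepT2 : ∑ ω, φ ω * allFac σ γ s ω
        = (Fintype.card M.X2 : ℝ)⁻¹ *
          ∑ ω, φ ω * (stageF σ γ s ω * fT0 s ω * fT1 s ω) := by
      have := elim_uX2 (s+1)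
        (fun ω => φ ω * (stageF σ γ s ω * fT0 s ω * fT1 s ω))
        (fun ω => fT2 s ω)
        (by
          intro v ω
          simp only [stageF]
          rw [hφ.hx2 (s+1) (by omega) hnext, fF2_uX2 (by omega) hnext,
            fZv_uX2 (by omega) hnext, fG2_uX2 (by omega) hnext]
          all_goals rfl)
        (by
          intro ω
          simp only [fT2_eval (Nat.lt_succ_self s) hnext]
          exact M.trans2_sum _ _ _)
      rw [← this]
      refine Finset.sum_congr rfl fun ω _ => ?_
      rw [allFac, fTr, if_pos hnext]; ring
    have stepT1 : ∑ ω, φ ω * (stageF σ γ s ω * fT0 s ω * fT1 s ω)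
        = (Fintype.card M.X1 : ℝ)⁻¹ *
          ∑ ω, φ ω * (stageF σ γ s ω * fT0 s ω) := by
      have := elim_uX1 (s+1)
        (fun ω => φ ω * (stageF σ γ s ω * fT0 s ω))
        (fun ω => fT1 s ω)
        (by
          intro v ω
          simp only [stageF]
          rw [hφ.hx1 (s+1) (by omega) hnext, fF1_uX1 (by omega) hnext,
            fZv_uX1 (by omega) hnext, fG1_uX1 (by omega) hnext]
          all_goals rfl)
        (by
          intro ω
          simp only [fT1_eval (Nat.lt_succ_self s) hnext]
          exact M.trans1_sum _ _ _)
      rw [← this]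
      refine Finset.sum_congr rfl fun ω _ => ?_
      ring
    have stepT0 : ∑ ω, φ ω * (stageF σ γ s ω * fT0 s ω)
        = (Fintype.card M.X0 : ℝ)⁻¹ * ∑ ω, φ ω * stageF σ γ s ω := by
      have := elim_uX0 (s+1)
        (fun ω => φ ω * stageF σ γ s ω)
        (fun ω => fT0 s ω)
        (by
          intro v ω
          simp only [stageF]
          rw [hφ.hx0 (s+1) (by omega) hnext, fF1_uX0 (by omega) hnext,
            fF2_uX0 (by omega) hnext, fZv_uX0 (by omega) hnext,
            fYv_uX0 (by omega) hnext, fG1_uX0 (by omega) hnext,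
            fG2_uX0 (by omega) hnext, fGa_uX0 (by omega) hnext]
          all_goals rfl)
        (by
          intro ω
          simp only [fT0_eval (Nat.lt_succ_self s) hnext]
          exact M.trans0_sum _ _)
      rw [← this]
      refine Finset.sum_congr rfl fun ω _ => ?_
      ring
    rw [stepT2, stepT1, stepT0, stage7_elim hsT φ hφ, cFac, if_pos hnext, cX3]
    ring
  · have h1 : ∑ ω, φ ω * allFac σ γ s ω = ∑ ω, φ ω * stageF σ γ s ω := by
      refine Finset.sum_congr rfl fun ω _ => ?_
      rw [allFac, fTr, if_neg hnext, mul_one]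
    rw [h1, stage7_elim hsT φ hφ, cFac, if_neg hnext]
    ring

lemma peel (n : ℕ) : ∀ s, M.T - s = n → ∀ φ : Traj M → ℝ, Inv M s φ →
    ∑ ω, φ ω * ∏ r ∈ Finset.Ico s M.T, allFac σ γ r ω
      = (∏ r ∈ Finset.Ico s M.T, cFac M r) * ∑ ω, φ ω := by
  induction n with
  | zero =>
    intro s hs φ hφ
    rw [Finset.Ico_eq_empty (by omega)]
    simp
  | succ n ih =>
    intro s hs φ hφ
    have hsT : s < M.T := by omega
    have hsplit : ∀ f : ℕ → ℝ,
        ∏ r ∈ Finset.Ico s M.T, f r = f s * ∏ r ∈ Finset.Ico (s+1) M.T, f r :=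
      fun f => Finset.prod_eq_prod_Ico_succ_bot hsT f
    calc ∑ ω, φ ω * ∏ r ∈ Finset.Ico s M.T, allFac σ γ r ω
        = ∑ ω, (fun ω => φ ω * allFac σ γ s ω) ω * ∏ r ∈ Finset.Ico (s+1) M.T, allFac σ γ r ω := by
          refine Finset.sum_congr rfl fun ω _ => ?_
          rw [hsplit (fun r => allFac σ γ r ω)]; ring
      _ = (∏ r ∈ Finset.Ico (s+1) M.T, cFac M r) * ∑ ω, φ ω * allFac σ γ s ω :=
          ih (s+1) (by omega) _ (Inv.mul (hφ.mono (Nat.le_succ s)) inv_allFac)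
      _ = (∏ r ∈ Finset.Ico (s+1) M.T, cFac M r) * (cFac M s * ∑ ω, φ ω) := by
          rw [stage_elim hsT φ hφ]
      _ = (∏ r ∈ Finset.Ico s M.T, cFac M r) * ∑ ω, φ ω := by
          rw [hsplit (fun r => cFac M r)]; ring

end Lemma3Infra5


section Lemma3Infra6
variable {M : Model} {σ : TeamStrategy M} {γ : AdvStrategy M (HistC M)} {t : ℕ}

noncomputable def cP1 (M : Model) (t : ℕ) : ℝ :=
  (if t + 1 < M.T then cX3 M else 1) * (Fintype.card M.Ua : ℝ)⁻¹ *
    (Fintype.card M.U2 : ℝ)⁻¹ * (Fintype.card M.U1 : ℝ)⁻¹ *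
    (Fintype.card M.Y : ℝ)⁻¹ * (Fintype.card (Option (M.X1 × M.X2)) : ℝ)⁻¹

noncomputable def cP2 (M : Model) (t : ℕ) : ℝ :=
  (if t + 1 < M.T then cX3 M else 1) * (Fintype.card M.Ua : ℝ)⁻¹

/-- Partial elimination of stage `t`, keeping the `fF1, fF2` factors. -/
lemma partial1 (hsT : t < M.T) (φ : Traj M → ℝ)
    (hx0 : ∀ (v : M.X0) ω, t + 1 < M.T → φ (uX0 (t+1) v ω) = φ ω)
    (hx1 : ∀ (v : M.X1) ω, t + 1 < M.T → φ (uX1 (t+1) v ω) = φ ω)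
    (hx2 : ∀ (v : M.X2) ω, t + 1 < M.T → φ (uX2 (t+1) v ω) = φ ω)
    (hz : ∀ (v : Option (M.X1 × M.X2)) ω, φ (uZ t v ω) = φ ω)
    (hy : ∀ (v : M.Y) ω, φ (uY t v ω) = φ ω)
    (hu1 : ∀ (v : M.U1) ω, φ (uU1 t v ω) = φ ω)
    (hu2 : ∀ (v : M.U2) ω, φ (uU2 t v ω) = φ ω)
    (hua : ∀ (v : M.Ua) ω, φ (uUa t v ω) = φ ω) :
    ∑ ω, φ ω * allFac σ γ t ω = cP1 M t * ∑ ω, φ ω * (fF1 σ t ω * fF2 σ t ω) := by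
  have hXdone : ∑ ω, φ ω * allFac σ γ t ω
      = (if t + 1 < M.T then cX3 M else 1) * ∑ ω, φ ω * stageF σ γ t ω := by
    by_cases hnext : t + 1 < M.T
    · have stepT2 : ∑ ω, φ ω * allFac σ γ t ω
          = (Fintype.card M.X2 : ℝ)⁻¹ *
            ∑ ω, φ ω * (stageF σ γ t ω * fT0 t ω * fT1 t ω) := by
        have := elim_uX2 (t+1)
          (fun ω => φ ω * (stageF σ γ t ω * fT0 t ω * fT1 t ω))
          (fun ω => fT2 t ω)
          (by
            intro v ω
            simp only [stageF]
            rw [hx2 v ω hnext, fF2_uX2 (by omega) hnext,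
              fZv_uX2 (by omega) hnext, fG2_uX2 (by omega) hnext]
            all_goals rfl)
          (by
            intro ω
            simp only [fT2_eval (Nat.lt_succ_self t) hnext]
            exact M.trans2_sum _ _ _)
        rw [← this]
        refine Finset.sum_congr rfl fun ω _ => ?_
        rw [allFac, fTr, if_pos hnext]; ring
      have stepT1 : ∑ ω, φ ω * (stageF σ γ t ω * fT0 t ω * fT1 t ω)
          = (Fintype.card M.X1 : ℝ)⁻¹ *
            ∑ ω, φ ω * (stageF σ γ t ω * fT0 t ω) := by
        have := elim_uX1 (t+1)
          (fun ω => φ ω * (stageF σ γ t ω * fT0 t ω))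
          (fun ω => fT1 t ω)
          (by
            intro v ω
            simp only [stageF]
            rw [hx1 v ω hnext, fF1_uX1 (by omega) hnext,
              fZv_uX1 (by omega) hnext, fG1_uX1 (by omega) hnext]
            all_goals rfl)
          (by
            intro ω
            simp only [fT1_eval (Nat.lt_succ_self t) hnext]
            exact M.trans1_sum _ _ _)
        rw [← this]
        refine Finset.sum_congr rfl fun ω _ => ?_
        ring
      have stepT0 : ∑ ω, φ ω * (stageF σ γ t ω * fT0 t ω)
          = (Fintype.card M.X0 : ℝ)⁻¹ * ∑ ω, φ ω * stageF σ γ t ω := by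
        have := elim_uX0 (t+1)
          (fun ω => φ ω * stageF σ γ t ω)
          (fun ω => fT0 t ω)
          (by
            intro v ω
            simp only [stageF]
            rw [hx0 v ω hnext, fF1_uX0 (by omega) hnext,
              fF2_uX0 (by omega) hnext, fZv_uX0 (by omega) hnext,
              fYv_uX0 (by omega) hnext, fG1_uX0 (by omega) hnext,
              fG2_uX0 (by omega) hnext, fGa_uX0 (by omega) hnext]
            all_goals rfl)
          (by
            intro ω
            simp only [fT0_eval (Nat.lt_succ_self t) hnext]
            exact M.trans0_sum _ _)
        rw [← this]
        refine Finset.sum_congr rfl fun ω _ => ?_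
        ring
      rw [stepT2, stepT1, stepT0, if_pos hnext, cX3]
      ring
    · rw [if_neg hnext, one_mul]
      refine Finset.sum_congr rfl fun ω _ => ?_
      rw [allFac, fTr, if_neg hnext, mul_one]
  have stepUa : ∑ ω, φ ω * stageF σ γ t ω
      = (Fintype.card M.Ua : ℝ)⁻¹ * ∑ ω, φ ω * teamStage σ t ω := by
    have := elim_uUa t (fun ω => φ ω * teamStage σ t ω) (fun ω => fGa γ t ω)
      (by
        intro v ω
        simp only [teamStage]
        rw [hua v ω, fF1_uUa le_rfl hsT, fF2_uUa le_rfl hsT,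
          fG1_uUa le_rfl hsT, fG2_uUa le_rfl hsT]
        all_goals rfl)
      (by intro ω; simp only [fGa_eval hsT]; exact γ.ga_sum t _)
    rw [← this]
    refine Finset.sum_congr rfl fun ω _ => ?_
    simp only [stageF, teamStage]; ring
  have stepU2 : ∑ ω, φ ω * teamStage σ t ω
      = (Fintype.card M.U2 : ℝ)⁻¹ *
        ∑ ω, φ ω * (fF1 σ t ω * fF2 σ t ω * fZv t ω * fYv t ω * fG1 σ t ω) := by
    have := elim_uU2 t
      (fun ω => φ ω * (fF1 σ t ω * fF2 σ t ω * fZv t ω * fYv t ω * fG1 σ t ω))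
      (fun ω => fG2 σ t ω)
      (by
        intro v ω
        rw [hu2 v ω, fF2_uU2 le_rfl hsT]
        all_goals rfl)
      (by intro ω; simp only [fG2_eval hsT]; exact σ.g2_sum t _)
    rw [← this]
    refine Finset.sum_congr rfl fun ω _ => ?_
    simp only [teamStage]; ring
  have stepU1 : ∑ ω, φ ω * (fF1 σ t ω * fF2 σ t ω * fZv t ω * fYv t ω * fG1 σ t ω)
      = (Fintype.card M.U1 : ℝ)⁻¹ *
        ∑ ω, φ ω * (fF1 σ t ω * fF2 σ t ω * fZv t ω * fYv t ω) := by
    have := elim_uU1 t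
      (fun ω => φ ω * (fF1 σ t ω * fF2 σ t ω * fZv t ω * fYv t ω))
      (fun ω => fG1 σ t ω)
      (by
        intro v ω
        rw [hu1 v ω, fF1_uU1 le_rfl hsT]
        all_goals rfl)
      (by intro ω; simp only [fG1_eval hsT]; exact σ.g1_sum t _)
    rw [← this]
    refine Finset.sum_congr rfl fun ω _ => ?_
    ring
  have stepY : ∑ ω, φ ω * (fF1 σ t ω * fF2 σ t ω * fZv t ω * fYv t ω)
      = (Fintype.card M.Y : ℝ)⁻¹ *
        ∑ ω, φ ω * (fF1 σ t ω * fF2 σ t ω * fZv t ω) := by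
    have := elim_uY t
      (fun ω => φ ω * (fF1 σ t ω * fF2 σ t ω * fZv t ω))
      (fun ω => fYv t ω)
      (by
        intro v ω
        rw [hy v ω, fF1_uY le_rfl hsT, fF2_uY le_rfl hsT]
        all_goals rfl)
      (by intro ω; simp only [fYv_eval]; exact M.obs_sum _ _ _)
    rw [← this]
    refine Finset.sum_congr rfl fun ω _ => ?_
    ring
  have stepZ : ∑ ω, φ ω * (fF1 σ t ω * fF2 σ t ω * fZv t ω)
      = (Fintype.card (Option (M.X1 × M.X2)) : ℝ)⁻¹ *
        ∑ ω, φ ω * (fF1 σ t ω * fF2 σ t ω) := by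
    have := elim_uZ t
      (fun ω => φ ω * (fF1 σ t ω * fF2 σ t ω))
      (fun ω => fZv t ω)
      (by
        intro v ω
        rw [hz v ω, fF1_uZ le_rfl hsT, fF2_uZ le_rfl hsT]
        all_goals rfl)
      (by intro ω; simp only [fZv_eval]; exact zKer_sum _ _ _)
    rw [← this]
    refine Finset.sum_congr rfl fun ω _ => ?_
    ring
  rw [hXdone, stepUa, stepU2, stepU1, stepY, stepZ, cP1]
  ring

/-- Partial elimination of stage `t`, keeping all team factors. -/
lemma partial2 (hsT : t < M.T) (φ : Traj M → ℝ)
    (hx0 : ∀ (v : M.X0) ω, t + 1 < M.T → φ (uX0 (t+1) v ω) = φ ω)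
    (hx1 : ∀ (v : M.X1) ω, t + 1 < M.T → φ (uX1 (t+1) v ω) = φ ω)
    (hx2 : ∀ (v : M.X2) ω, t + 1 < M.T → φ (uX2 (t+1) v ω) = φ ω)
    (hua : ∀ (v : M.Ua) ω, φ (uUa t v ω) = φ ω) :
    ∑ ω, φ ω * allFac σ γ t ω = cP2 M t * ∑ ω, φ ω * teamStage σ t ω := by
  have hXdone : ∑ ω, φ ω * allFac σ γ t ω
      = (if t + 1 < M.T then cX3 M else 1) * ∑ ω, φ ω * stageF σ γ t ω := by
    by_cases hnext : t + 1 < M.T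
    · have stepT2 : ∑ ω, φ ω * allFac σ γ t ω
          = (Fintype.card M.X2 : ℝ)⁻¹ *
            ∑ ω, φ ω * (stageF σ γ t ω * fT0 t ω * fT1 t ω) := by
        have := elim_uX2 (t+1)
          (fun ω => φ ω * (stageF σ γ t ω * fT0 t ω * fT1 t ω))
          (fun ω => fT2 t ω)
          (by
            intro v ω
            simp only [stageF]
            rw [hx2 v ω hnext, fF2_uX2 (by omega) hnext,
              fZv_uX2 (by omega) hnext, fG2_uX2 (by omega) hnext]
            all_goals rfl)
          (by
            intro ω
            simp only [fT2_eval (Nat.lt_succ_self t) hnext]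
            exact M.trans2_sum _ _ _)
        rw [← this]
        refine Finset.sum_congr rfl fun ω _ => ?_
        rw [allFac, fTr, if_pos hnext]; ring
      have stepT1 : ∑ ω, φ ω * (stageF σ γ t ω * fT0 t ω * fT1 t ω)
          = (Fintype.card M.X1 : ℝ)⁻¹ *
            ∑ ω, φ ω * (stageF σ γ t ω * fT0 t ω) := by
        have := elim_uX1 (t+1)
          (fun ω => φ ω * (stageF σ γ t ω * fT0 t ω))
          (fun ω => fT1 t ω)
          (by
            intro v ω
            simp only [stageF]
            rw [hx1 v ω hnext, fF1_uX1 (by omega) hnext,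
              fZv_uX1 (by omega) hnext, fG1_uX1 (by omega) hnext]
            all_goals rfl)
          (by
            intro ω
            simp only [fT1_eval (Nat.lt_succ_self t) hnext]
            exact M.trans1_sum _ _ _)
        rw [← this]
        refine Finset.sum_congr rfl fun ω _ => ?_
        ring
      have stepT0 : ∑ ω, φ ω * (stageF σ γ t ω * fT0 t ω)
          = (Fintype.card M.X0 : ℝ)⁻¹ * ∑ ω, φ ω * stageF σ γ t ω := by
        have := elim_uX0 (t+1)
          (fun ω => φ ω * stageF σ γ t ω)
          (fun ω => fT0 t ω)
          (by
            intro v ω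
            simp only [stageF]
            rw [hx0 v ω hnext, fF1_uX0 (by omega) hnext,
              fF2_uX0 (by omega) hnext, fZv_uX0 (by omega) hnext,
              fYv_uX0 (by omega) hnext, fG1_uX0 (by omega) hnext,
              fG2_uX0 (by omega) hnext, fGa_uX0 (by omega) hnext]
            all_goals rfl)
          (by
            intro ω
            simp only [fT0_eval (Nat.lt_succ_self t) hnext]
            exact M.trans0_sum _ _)
        rw [← this]
        refine Finset.sum_congr rfl fun ω _ => ?_
        ring
      rw [stepT2, stepT1, stepT0, if_pos hnext, cX3]
      ring
    · rw [if_neg hnext, one_mul]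
      refine Finset.sum_congr rfl fun ω _ => ?_
      rw [allFac, fTr, if_neg hnext, mul_one]
  have stepUa : ∑ ω, φ ω * stageF σ γ t ω
      = (Fintype.card M.Ua : ℝ)⁻¹ * ∑ ω, φ ω * teamStage σ t ω := by
    have := elim_uUa t (fun ω => φ ω * teamStage σ t ω) (fun ω => fGa γ t ω)
      (by
        intro v ω
        simp only [teamStage]
        rw [hua v ω, fF1_uUa le_rfl hsT, fF2_uUa le_rfl hsT,
          fG1_uUa le_rfl hsT, fG2_uUa le_rfl hsT]
        all_goals rfl)
      (by intro ω; simp only [fGa_eval hsT]; exact γ.ga_sum t _)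
    rw [← this]
    refine Finset.sum_congr rfl fun ω _ => ?_
    simp only [stageF, teamStage]; ring
  rw [hXdone, stepUa, cP2]
  ring

end Lemma3Infra6


section Lemma3Infra7
variable {M : Model} {σ : TeamStrategy M} {γ : AdvStrategy M (HistC M)} {t : ℕ}

lemma pre_take {α : Type _} {f : ℕ → α} {k n : ℕ} (h : k ≤ n) :
    (pre n f).take k = pre k f := by
  unfold pre
  rw [← List.map_take, List.take_range, min_eq_left h]

lemma pre_getD {α : Type _} {f : ℕ → α} {k n : ℕ} (h : k < n) (d : α) :
    (pre n f).getD k d = f k := by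
  unfold pre
  simp [List.getD, List.getElem?_map, List.getElem?_range h]

noncomputable def cio (ι : HistC M) (r : ℕ) : HistC M :=
  (ι.1.take (r+1), ι.2.1.take (r+1), ι.2.2.1.take (r+1), ι.2.2.2.1.take r,
   ι.2.2.2.2.take (r+1))

noncomputable def Agam (γ : AdvStrategy M (HistC M)) (ι : HistC M) (t : ℕ) : ℝ :=
  ∏ r ∈ Finset.range t, γ.ga r (cio ι r) (ι.2.2.2.1.getD r (Classical.arbitrary M.Ua))

lemma hcom1 {ω : Traj M} {ι : HistC M} (h : teamCom t ω = ι) :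
    ∀ r, r < t → teamComP r ω = cio ι r ∧
      UAv ω r = ι.2.2.2.1.getD r (Classical.arbitrary M.Ua) := by
  intro r hr
  have h0 : pre (t+1) (X0v ω) = ι.1 := congrArg (fun p : HistC M => p.1) h
  have h1 : pre t (Mv ω) = ι.2.1 := congrArg (fun p : HistC M => p.2.1) h
  have h2 : pre t (Zv ω) = ι.2.2.1 := congrArg (fun p : HistC M => p.2.2.1) h
  have h3 : pre t (UAv ω) = ι.2.2.2.1 := congrArg (fun p : HistC M => p.2.2.2.1) h
  have h4 : pre t (Yv ω) = ι.2.2.2.2 := congrArg (fun p : HistC M => p.2.2.2.2) h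
  constructor
  · show teamComP r ω = cio ι r
    unfold teamComP cio
    rw [← h0, ← h1, ← h2, ← h3, ← h4,
      pre_take (show r+1 ≤ t+1 by omega), pre_take (show r+1 ≤ t by omega),
      pre_take (show r+1 ≤ t by omega), pre_take (show r ≤ t by omega),
      pre_take (show r+1 ≤ t by omega)]
  · rw [← h3, pre_getD (show r < t by omega)]

lemma hcom2 {ω : Traj M} {ι : HistC M} (h : teamComP t ω = ι) :
    ∀ r, r < t → teamComP r ω = cio ι r ∧
      UAv ω r = ι.2.2.2.1.getD r (Classical.arbitrary M.Ua) := by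
  intro r hr
  have h0 : pre (t+1) (X0v ω) = ι.1 := congrArg (fun p : HistC M => p.1) h
  have h1 : pre (t+1) (Mv ω) = ι.2.1 := congrArg (fun p : HistC M => p.2.1) h
  have h2 : pre (t+1) (Zv ω) = ι.2.2.1 := congrArg (fun p : HistC M => p.2.2.1) h
  have h3 : pre t (UAv ω) = ι.2.2.2.1 := congrArg (fun p : HistC M => p.2.2.2.1) h
  have h4 : pre (t+1) (Yv ω) = ι.2.2.2.2 := congrArg (fun p : HistC M => p.2.2.2.2) h
  constructor
  · show teamComP r ω = cio ι r
    unfold teamComP cio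
    rw [← h0, ← h1, ← h2, ← h3, ← h4,
      pre_take (show r+1 ≤ t+1 by omega), pre_take (show r+1 ≤ t+1 by omega),
      pre_take (show r+1 ≤ t+1 by omega), pre_take (show r ≤ t by omega),
      pre_take (show r+1 ≤ t+1 by omega)]
  · rw [← h3, pre_getD (show r < t by omega)]

lemma extract (ι : HistC M) (P : Traj M → Prop) (R : Traj M → ℝ)
    (hcom : ∀ ω, P ω → ∀ r, r < t → teamComP r ω = cio ι r ∧
      UAv ω r = ι.2.2.2.1.getD r (Classical.arbitrary M.Ua)) :
    ∑ ω, ((if P ω then (1:ℝ) else 0) * (init3 ω * ∏ r ∈ Finset.range t, allFac σ γ r ω)) * R ω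
    = Agam γ ι t *
      ∑ ω, ((if P ω then (1:ℝ) else 0) * (init3 ω * ∏ r ∈ Finset.range t, teamFac σ r ω)) * R ω := by
  rw [Finset.mul_sum]
  refine Finset.sum_congr rfl fun ω _ => ?_
  by_cases h : P ω
  · have hga : ∏ r ∈ Finset.range t, fGa γ r ω = Agam γ ι t := by
      unfold Agam
      refine Finset.prod_congr rfl fun r hr => ?_
      have hr' := Finset.mem_range.mp hr
      rw [fGa, (hcom ω h r hr').1, (hcom ω h r hr').2]
    have hAll : ∏ r ∈ Finset.range t, allFac σ γ r ω
        = (∏ r ∈ Finset.range t, teamFac σ r ω) * ∏ r ∈ Finset.range t, fGa γ r ω := by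
      rw [← Finset.prod_mul_distrib]
      refine Finset.prod_congr rfl fun r hr => ?_
      simp only [allFac, teamFac, stageF, teamStage]
      ring
    rw [hAll, hga]
    ring
  · simp [if_neg h]

structure EvInv1 (M : Model) (t : ℕ) (P : Traj M → Prop) : Prop where
  ex0 : ∀ j, t < j → j < M.T → ∀ (v : M.X0) ω, (P (uX0 j v ω) ↔ P ω)
  ex1 : ∀ j, t < j → j < M.T → ∀ (v : M.X1) ω, (P (uX1 j v ω) ↔ P ω)
  ex2 : ∀ j, t < j → j < M.T → ∀ (v : M.X2) ω, (P (uX2 j v ω) ↔ P ω)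
  em1 : ∀ j, t < j → j < M.T → ∀ (v : Bool) ω, (P (uM1 j v ω) ↔ P ω)
  em2 : ∀ j, t < j → j < M.T → ∀ (v : Bool) ω, (P (uM2 j v ω) ↔ P ω)
  ez : ∀ j, t ≤ j → j < M.T → ∀ (v : Option (M.X1 × M.X2)) ω, (P (uZ j v ω) ↔ P ω)
  ey : ∀ j, t ≤ j → j < M.T → ∀ (v : M.Y) ω, (P (uY j v ω) ↔ P ω)
  eu1 : ∀ j, t ≤ j → j < M.T → ∀ (v : M.U1) ω, (P (uU1 j v ω) ↔ P ω)
  eu2 : ∀ j, t ≤ j → j < M.T → ∀ (v : M.U2) ω, (P (uU2 j v ω) ↔ P ω)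
  eua : ∀ j, t ≤ j → j < M.T → ∀ (v : M.Ua) ω, (P (uUa j v ω) ↔ P ω)

structure EvInv2 (M : Model) (t : ℕ) (P : Traj M → Prop) : Prop where
  ex0 : ∀ j, t < j → j < M.T → ∀ (v : M.X0) ω, (P (uX0 j v ω) ↔ P ω)
  ex1 : ∀ j, t < j → j < M.T → ∀ (v : M.X1) ω, (P (uX1 j v ω) ↔ P ω)
  ex2 : ∀ j, t < j → j < M.T → ∀ (v : M.X2) ω, (P (uX2 j v ω) ↔ P ω)
  em1 : ∀ j, t < j → j < M.T → ∀ (v : Bool) ω, (P (uM1 j v ω) ↔ P ω)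
  em2 : ∀ j, t < j → j < M.T → ∀ (v : Bool) ω, (P (uM2 j v ω) ↔ P ω)
  ez : ∀ j, t < j → j < M.T → ∀ (v : Option (M.X1 × M.X2)) ω, (P (uZ j v ω) ↔ P ω)
  ey : ∀ j, t < j → j < M.T → ∀ (v : M.Y) ω, (P (uY j v ω) ↔ P ω)
  eu1 : ∀ j, t < j → j < M.T → ∀ (v : M.U1) ω, (P (uU1 j v ω) ↔ P ω)
  eu2 : ∀ j, t < j → j < M.T → ∀ (v : M.U2) ω, (P (uU2 j v ω) ↔ P ω)
  eua : ∀ j, t ≤ j → j < M.T → ∀ (v : M.Ua) ω, (P (uUa j v ω) ↔ P ω)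

noncomputable def KK1 (M : Model) (t : ℕ) : ℝ :=
  (∏ r ∈ Finset.Ico (t+1) M.T, cFac M r) * cP1 M t

noncomputable def KK2 (M : Model) (t : ℕ) : ℝ :=
  (∏ r ∈ Finset.Ico (t+1) M.T, cFac M r) * cP2 M t

noncomputable def SS1 (σ : TeamStrategy M) (t : ℕ) (P : Traj M → Prop) : ℝ :=
  ∑ ω, ((if P ω then (1:ℝ) else 0) * (init3 ω * ∏ r ∈ Finset.range t, teamFac σ r ω)) *
    (fF1 σ t ω * fF2 σ t ω)

noncomputable def SS2 (σ : TeamStrategy M) (t : ℕ) (P : Traj M → Prop) : ℝ :=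
  ∑ ω, ((if P ω then (1:ℝ) else 0) * (init3 ω * ∏ r ∈ Finset.range t, teamFac σ r ω)) *
    teamStage σ t ω

lemma master1 (ht : t < M.T) (ι : HistC M) (P : Traj M → Prop) (hP : EvInv1 M t P)
    (hPE : ∀ ω, P ω → teamCom t ω = ι) :
    pr σ γ teamComP P = KK1 M t * (Agam γ ι t * SS1 σ t P) := by
  have hind : Inv M (t+1) (fun ω => if P ω then (1:ℝ) else 0) :=
    ⟨fun j a b v ω => if_congr (hP.ex0 j (by omega) b v ω) rfl rfl,
     fun j a b v ω => if_congr (hP.ex1 j (by omega) b v ω) rfl rfl,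
     fun j a b v ω => if_congr (hP.ex2 j (by omega) b v ω) rfl rfl,
     fun j a b v ω => if_congr (hP.em1 j (by omega) b v ω) rfl rfl,
     fun j a b v ω => if_congr (hP.em2 j (by omega) b v ω) rfl rfl,
     fun j a b v ω => if_congr (hP.ez j (by omega) b v ω) rfl rfl,
     fun j a b v ω => if_congr (hP.ey j (by omega) b v ω) rfl rfl,
     fun j a b v ω => if_congr (hP.eu1 j (by omega) b v ω) rfl rfl,
     fun j a b v ω => if_congr (hP.eu2 j (by omega) b v ω) rfl rfl,
     fun j a b v ω => if_congr (hP.eua j (by omega) b v ω) rfl rfl⟩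
  have hbase : Inv M t (fun ω => init3 ω * ∏ r ∈ Finset.range t, allFac σ γ r ω) :=
    Inv.mul (inv_init3.mono (Nat.zero_le t)) inv_prod_allFac
  have hφInv : Inv M (t+1)
      (fun ω => (if P ω then (1:ℝ) else 0) *
        (init3 ω * ∏ r ∈ Finset.range (t+1), allFac σ γ r ω)) :=
    Inv.mul hind (Inv.mul (inv_init3.mono (Nat.zero_le _)) inv_prod_allFac)
  have stepA : pr σ γ teamComP P
      = ∑ ω, (fun ω => (if P ω then (1:ℝ) else 0) *
          (init3 ω * ∏ r ∈ Finset.range (t+1), allFac σ γ r ω)) ω *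
          ∏ r ∈ Finset.Ico (t+1) M.T, allFac σ γ r ω := by
    unfold pr
    refine Finset.sum_congr rfl fun ω _ => ?_
    dsimp only
    by_cases h : P ω
    · rw [if_pos h, if_pos h, prob_factor]
      have hsplit : ∏ r ∈ Finset.range M.T, allFac σ γ r ω
          = (∏ r ∈ Finset.range (t+1), allFac σ γ r ω) *
            ∏ r ∈ Finset.Ico (t+1) M.T, allFac σ γ r ω := by
        rw [Finset.range_eq_Ico,
          ← Finset.prod_Ico_consecutive _ (Nat.zero_le (t+1)) (show t+1 ≤ M.T by omega),
          ← Finset.range_eq_Ico]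
      rw [hsplit]; ring
    · rw [if_neg h, if_neg h]; ring
  have stepB := peel (σ := σ) (γ := γ) (M.T - (t+1)) (t+1) rfl _ hφInv
  have stepC : ∑ ω, (fun ω => (if P ω then (1:ℝ) else 0) *
        (init3 ω * ∏ r ∈ Finset.range (t+1), allFac σ γ r ω)) ω
      = ∑ ω, (fun ω => (if P ω then (1:ℝ) else 0) *
          (init3 ω * ∏ r ∈ Finset.range t, allFac σ γ r ω)) ω * allFac σ γ t ω := by
    refine Finset.sum_congr rfl fun ω _ => ?_
    dsimp only
    rw [Finset.prod_range_succ]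
    ring
  have stepD := partial1 (σ := σ) (γ := γ) ht
    (fun ω => (if P ω then (1:ℝ) else 0) *
      (init3 ω * ∏ r ∈ Finset.range t, allFac σ γ r ω))
    (fun v ω hnext => congrArg₂ (· * ·)
      (if_congr (hP.ex0 (t+1) (by omega) hnext v ω) rfl rfl)
      (hbase.hx0 (t+1) (by omega) hnext v ω))
    (fun v ω hnext => congrArg₂ (· * ·)
      (if_congr (hP.ex1 (t+1) (by omega) hnext v ω) rfl rfl)
      (hbase.hx1 (t+1) (by omega) hnext v ω))
    (fun v ω hnext => congrArg₂ (· * ·)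
      (if_congr (hP.ex2 (t+1) (by omega) hnext v ω) rfl rfl)
      (hbase.hx2 (t+1) (by omega) hnext v ω))
    (fun v ω => congrArg₂ (· * ·)
      (if_congr (hP.ez t le_rfl ht v ω) rfl rfl) (hbase.hz t le_rfl ht v ω))
    (fun v ω => congrArg₂ (· * ·)
      (if_congr (hP.ey t le_rfl ht v ω) rfl rfl) (hbase.hy t le_rfl ht v ω))
    (fun v ω => congrArg₂ (· * ·)
      (if_congr (hP.eu1 t le_rfl ht v ω) rfl rfl) (hbase.hu1 t le_rfl ht v ω))
    (fun v ω => congrArg₂ (· * ·)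
      (if_congr (hP.eu2 t le_rfl ht v ω) rfl rfl) (hbase.hu2 t le_rfl ht v ω))
    (fun v ω => congrArg₂ (· * ·)
      (if_congr (hP.eua t le_rfl ht v ω) rfl rfl) (hbase.hua t le_rfl ht v ω))
  have stepE := extract (σ := σ) (γ := γ) ι P (fun ω => fF1 σ t ω * fF2 σ t ω)
    (fun ω h => hcom1 (hPE ω h))
  rw [stepA, stepB, stepC, stepD, stepE, KK1, SS1]
  ring

lemma master2 (ht : t < M.T) (ι : HistC M) (P : Traj M → Prop) (hP : EvInv2 M t P)
    (hPE : ∀ ω, P ω → teamComP t ω = ι) :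
    pr σ γ teamComP P = KK2 M t * (Agam γ ι t * SS2 σ t P) := by
  have hind : Inv M (t+1) (fun ω => if P ω then (1:ℝ) else 0) :=
    ⟨fun j a b v ω => if_congr (hP.ex0 j (by omega) b v ω) rfl rfl,
     fun j a b v ω => if_congr (hP.ex1 j (by omega) b v ω) rfl rfl,
     fun j a b v ω => if_congr (hP.ex2 j (by omega) b v ω) rfl rfl,
     fun j a b v ω => if_congr (hP.em1 j (by omega) b v ω) rfl rfl,
     fun j a b v ω => if_congr (hP.em2 j (by omega) b v ω) rfl rfl,
     fun j a b v ω => if_congr (hP.ez j (by omega) b v ω) rfl rfl,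
     fun j a b v ω => if_congr (hP.ey j (by omega) b v ω) rfl rfl,
     fun j a b v ω => if_congr (hP.eu1 j (by omega) b v ω) rfl rfl,
     fun j a b v ω => if_congr (hP.eu2 j (by omega) b v ω) rfl rfl,
     fun j a b v ω => if_congr (hP.eua j (by omega) b v ω) rfl rfl⟩
  have hbase : Inv M t (fun ω => init3 ω * ∏ r ∈ Finset.range t, allFac σ γ r ω) :=
    Inv.mul (inv_init3.mono (Nat.zero_le t)) inv_prod_allFac
  have hφInv : Inv M (t+1)
      (fun ω => (if P ω then (1:ℝ) else 0) *
        (init3 ω * ∏ r ∈ Finset.range (t+1), allFac σ γ r ω)) :=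
    Inv.mul hind (Inv.mul (inv_init3.mono (Nat.zero_le _)) inv_prod_allFac)
  have stepA : pr σ γ teamComP P
      = ∑ ω, (fun ω => (if P ω then (1:ℝ) else 0) *
          (init3 ω * ∏ r ∈ Finset.range (t+1), allFac σ γ r ω)) ω *
          ∏ r ∈ Finset.Ico (t+1) M.T, allFac σ γ r ω := by
    unfold pr
    refine Finset.sum_congr rfl fun ω _ => ?_
    dsimp only
    by_cases h : P ω
    · rw [if_pos h, if_pos h, prob_factor]
      have hsplit : ∏ r ∈ Finset.range M.T, allFac σ γ r ω
          = (∏ r ∈ Finset.range (t+1), allFac σ γ r ω) *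
            ∏ r ∈ Finset.Ico (t+1) M.T, allFac σ γ r ω := by
        rw [Finset.range_eq_Ico,
          ← Finset.prod_Ico_consecutive _ (Nat.zero_le (t+1)) (show t+1 ≤ M.T by omega),
          ← Finset.range_eq_Ico]
      rw [hsplit]; ring
    · rw [if_neg h, if_neg h]; ring
  have stepB := peel (σ := σ) (γ := γ) (M.T - (t+1)) (t+1) rfl _ hφInv
  have stepC : ∑ ω, (fun ω => (if P ω then (1:ℝ) else 0) *
        (init3 ω * ∏ r ∈ Finset.range (t+1), allFac σ γ r ω)) ω
      = ∑ ω, (fun ω => (if P ω then (1:ℝ) else 0) *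
          (init3 ω * ∏ r ∈ Finset.range t, allFac σ γ r ω)) ω * allFac σ γ t ω := by
    refine Finset.sum_congr rfl fun ω _ => ?_
    dsimp only
    rw [Finset.prod_range_succ]
    ring
  have stepD := partial2 (σ := σ) (γ := γ) ht
    (fun ω => (if P ω then (1:ℝ) else 0) *
      (init3 ω * ∏ r ∈ Finset.range t, allFac σ γ r ω))
    (fun v ω hnext => congrArg₂ (· * ·)
      (if_congr (hP.ex0 (t+1) (by omega) hnext v ω) rfl rfl)
      (hbase.hx0 (t+1) (by omega) hnext v ω))
    (fun v ω hnext => congrArg₂ (· * ·)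
      (if_congr (hP.ex1 (t+1) (by omega) hnext v ω) rfl rfl)
      (hbase.hx1 (t+1) (by omega) hnext v ω))
    (fun v ω hnext => congrArg₂ (· * ·)
      (if_congr (hP.ex2 (t+1) (by omega) hnext v ω) rfl rfl)
      (hbase.hx2 (t+1) (by omega) hnext v ω))
    (fun v ω => congrArg₂ (· * ·)
      (if_congr (hP.eua t le_rfl ht v ω) rfl rfl) (hbase.hua t le_rfl ht v ω))
  have stepE := extract (σ := σ) (γ := γ) ι P (fun ω => teamStage σ t ω)
    (fun ω h => hcom2 (hPE ω h))
  rw [stepA, stepB, stepC, stepD, stepE, KK2, SS2]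
  ring

end Lemma3Infra7


section Lemma3Infra8
variable {M : Model} {σ : TeamStrategy M} {γ : AdvStrategy M (HistC M)} {t : ℕ}

lemma zKer_nonneg (x0 : M.X0) (m : Bool × Bool) (x : M.X1 × M.X2)
    (z : Option (M.X1 × M.X2)) : 0 ≤ zKer M x0 m x z := by
  unfold zKer
  by_cases hm : m = (false, false)
  · simp only [if_pos hm]
    split <;> norm_num
  · simp only [if_neg hm]
    match z with
    | none => exact M.pe_nonneg x0
    | some x' =>
      dsimp only
      split
      · linarith [M.pe_le_one x0]
      · norm_num

lemma teamStage_nonneg {s : ℕ} {ω : Traj M} : 0 ≤ teamStage σ s ω := by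
  unfold teamStage fF1 fF2 fZv fYv fG1 fG2
  exact mul_nonneg (mul_nonneg (mul_nonneg (mul_nonneg (mul_nonneg
    (σ.f1_nonneg _ _ _) (σ.f2_nonneg _ _ _)) (zKer_nonneg _ _ _ _))
    (M.obs_nonneg _ _ _ _)) (σ.g1_nonneg _ _ _)) (σ.g2_nonneg _ _ _)

lemma fTr_nonneg {s : ℕ} {ω : Traj M} : 0 ≤ fTr s ω := by
  unfold fTr fT0 fT1 fT2
  split
  · exact mul_nonneg (mul_nonneg (M.trans0_nonneg _ _ _) (M.trans1_nonneg _ _ _ _))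
      (M.trans2_nonneg _ _ _ _)
  · norm_num

lemma teamFac_nonneg {s : ℕ} {ω : Traj M} : 0 ≤ teamFac σ s ω :=
  mul_nonneg teamStage_nonneg fTr_nonneg

lemma init3_nonneg {ω : Traj M} : 0 ≤ init3 ω :=
  mul_nonneg (mul_nonneg (M.init0_nonneg _) (M.init1_nonneg _)) (M.init2_nonneg _)

lemma SS1_nonneg {P : Traj M → Prop} : 0 ≤ SS1 σ t P := by
  refine Finset.sum_nonneg fun ω _ => ?_
  refine mul_nonneg (mul_nonneg ?_ (mul_nonneg init3_nonneg
    (Finset.prod_nonneg fun r _ => teamFac_nonneg))) ?_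
  · split <;> norm_num
  · unfold fF1 fF2
    exact mul_nonneg (σ.f1_nonneg _ _ _) (σ.f2_nonneg _ _ _)

lemma SS2_nonneg {P : Traj M → Prop} : 0 ≤ SS2 σ t P := by
  refine Finset.sum_nonneg fun ω _ => ?_
  refine mul_nonneg (mul_nonneg ?_ (mul_nonneg init3_nonneg
    (Finset.prod_nonneg fun r _ => teamFac_nonneg))) teamStage_nonneg
  split <;> norm_num

lemma Agam_nonneg {ι : HistC M} : 0 ≤ Agam γ ι t :=
  Finset.prod_nonneg fun r _ => γ.ga_nonneg _ _ _

lemma Agam_open {ι : HistC M} : Agam (advOpen M ι) ι t = 1 := by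
  unfold Agam advOpen openLoop
  simp

lemma cardR_pos (α : Type _) [Fintype α] [Nonempty α] : (0:ℝ) < (Fintype.card α : ℝ) := by
  exact_mod_cast Fintype.card_pos

lemma c7_pos : 0 < c7 M := by
  unfold c7
  have h1 := cardR_pos M.Ua
  have h2 := cardR_pos M.U2
  have h3 := cardR_pos M.U1
  have h4 := cardR_pos M.Y
  have h5 := cardR_pos (Option (M.X1 × M.X2))
  have h6 := cardR_pos Bool
  positivity

lemma cX3_pos : 0 < cX3 M := by
  unfold cX3
  have h1 := cardR_pos M.X0
  have h2 := cardR_pos M.X1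
  have h3 := cardR_pos M.X2
  positivity

lemma cFac_pos {r : ℕ} : 0 < cFac M r := by
  unfold cFac
  rcases lt_or_ge (r+1) M.T with h | h
  · rw [if_pos h]; exact mul_pos c7_pos cX3_pos
  · rw [if_neg (by omega)]; exact mul_pos c7_pos one_pos

lemma cP1_pos : 0 < cP1 M t := by
  unfold cP1
  have h1 := cardR_pos M.Ua
  have h2 := cardR_pos M.U2
  have h3 := cardR_pos M.U1
  have h4 := cardR_pos M.Y
  have h5 := cardR_pos (Option (M.X1 × M.X2))
  have h6 := cX3_pos (M := M)
  split <;> positivity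

lemma cP2_pos : 0 < cP2 M t := by
  unfold cP2
  have h1 := cardR_pos M.Ua
  have h6 := cX3_pos (M := M)
  split <;> positivity

lemma KK1_pos : 0 < KK1 M t :=
  mul_pos (Finset.prod_pos fun r _ => cFac_pos) cP1_pos

lemma KK2_pos : 0 < KK2 M t :=
  mul_pos (Finset.prod_pos fun r _ => cFac_pos) cP2_pos

variable {ι : HistC M} {ξ1 : List M.X1} {ξ2 : List M.X2} {υ1 : List M.U1}
  {υ2 : List M.U2} {mt : Bool × Bool}

lemma evinv_E1 : EvInv1 M t (fun ω => teamCom t ω = ι) := by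
  constructor <;> intro j a b v ω
  · rw [teamCom_uX0 (by omega) b]; try exact Iff.rfl
  · rw [teamCom_uX1]; try exact Iff.rfl
  · rw [teamCom_uX2]; try exact Iff.rfl
  · rw [teamCom_uM1 (by omega) b]; try exact Iff.rfl
  · rw [teamCom_uM2 (by omega) b]; try exact Iff.rfl
  · rw [teamCom_uZ a b]; try exact Iff.rfl
  · rw [teamCom_uY a b]; try exact Iff.rfl
  · rw [teamCom_uU1]; try exact Iff.rfl
  · rw [teamCom_uU2]; try exact Iff.rfl
  · rw [teamCom_uUa a b]; try exact Iff.rfl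

lemma evinv_N1 : EvInv1 M t (fun ω =>
    (pre (t+1) (X1v ω) = ξ1 ∧ pre (t+1) (X2v ω) = ξ2 ∧
      pre t (U1v ω) = υ1 ∧ pre t (U2v ω) = υ2 ∧ Mv ω t = mt) ∧
    teamCom t ω = ι) := by
  constructor <;> intro j a b v ω
  · rw [teamCom_uX0 (by omega) b]; try exact Iff.rfl
  · rw [pre_uX1 (by omega) b]; try exact Iff.rfl
  · rw [pre_uX2 (by omega) b]; try exact Iff.rfl
  · rw [Mv_uM1 (by omega) b, teamCom_uM1 (by omega) b]; try exact Iff.rfl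
  · rw [Mv_uM2 (by omega) b, teamCom_uM2 (by omega) b]; try exact Iff.rfl
  · rw [teamCom_uZ a b]; try exact Iff.rfl
  · rw [teamCom_uY a b]; try exact Iff.rfl
  · rw [pre_uU1 a b]; try exact Iff.rfl
  · rw [pre_uU2 a b]; try exact Iff.rfl
  · rw [teamCom_uUa a b]; try exact Iff.rfl

lemma evinv_E2 : EvInv2 M t (fun ω => teamComP t ω = ι) := by
  constructor <;> intro j a b v ω
  · rw [teamComP_uX0 (by omega) b]; try exact Iff.rfl
  · rw [teamComP_uX1]; try exact Iff.rfl
  · rw [teamComP_uX2]; try exact Iff.rfl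
  · rw [teamComP_uM1 a b]; try exact Iff.rfl
  · rw [teamComP_uM2 a b]; try exact Iff.rfl
  · rw [teamComP_uZ a b]; try exact Iff.rfl
  · rw [teamComP_uY a b]; try exact Iff.rfl
  · rw [teamComP_uU1]; try exact Iff.rfl
  · rw [teamComP_uU2]; try exact Iff.rfl
  · rw [teamComP_uUa a b]; try exact Iff.rfl

lemma evinv_N2 : EvInv2 M t (fun ω =>
    (pre (t+1) (X1v ω) = ξ1 ∧ pre (t+1) (X2v ω) = ξ2 ∧
      pre (t+1) (U1v ω) = υ1 ∧ pre (t+1) (U2v ω) = υ2) ∧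
    teamComP t ω = ι) := by
  constructor <;> intro j a b v ω
  · rw [teamComP_uX0 (by omega) b]; try exact Iff.rfl
  · rw [pre_uX1 (by omega) b]; try exact Iff.rfl
  · rw [pre_uX2 (by omega) b]; try exact Iff.rfl
  · rw [teamComP_uM1 a b]; try exact Iff.rfl
  · rw [teamComP_uM2 a b]; try exact Iff.rfl
  · rw [teamComP_uZ a b]; try exact Iff.rfl
  · rw [teamComP_uY a b]; try exact Iff.rfl
  · rw [pre_uU1 (by omega) b]; try exact Iff.rfl
  · rw [pre_uU2 (by omega) b]; try exact Iff.rfl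
  · rw [teamComP_uUa a b]; try exact Iff.rfl

end Lemma3Infra8


/-- Lemma 3 of the appendix: in the maximal-information structure
(`Iᵃ_t = I¹_t ∩ I²_t = C^team_t`, `Iᵃ_{t⁺} = C^team_{t⁺}`), for a fixed team strategy `σ`
and *any* adversary strategy `γ`, the conditional distribution of
`(X_{1:t}, U_{1:t-1}, M_t)` given `Iᵃ_t` equals `Ψ_t`, and the conditional distribution of
`(X_{1:t}, U_{1:t})` given `Iᵃ_{t⁺}` equals `Ψ_{t⁺}`, almost surely; in particular these
conditional distributions do not depend on the adversary's strategy. -/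
theorem lemma3_appendix (M : Model) (σ : TeamStrategy M) (γ : AdvStrategy M (HistC M))
    (t : ℕ) (ht : t < M.T) (ι : HistC M)
    (ξ1 : List M.X1) (ξ2 : List M.X2) (υ1 : List M.U1) (υ2 : List M.U2)
    (mt : Bool × Bool) :
    (0 < pr σ γ teamComP (fun ω => teamCom t ω = ι) →
      cpr σ γ teamComP (fun ω => teamCom t ω = ι)
          (fun ω => pre (t+1) (X1v ω) = ξ1 ∧ pre (t+1) (X2v ω) = ξ2 ∧
                    pre t (U1v ω) = υ1 ∧ pre t (U2v ω) = υ2 ∧ Mv ω t = mt)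
        = Psi σ t ι ξ1 ξ2 υ1 υ2 mt) ∧
    (0 < pr σ γ teamComP (fun ω => teamComP t ω = ι) →
      cpr σ γ teamComP (fun ω => teamComP t ω = ι)
          (fun ω => pre (t+1) (X1v ω) = ξ1 ∧ pre (t+1) (X2v ω) = ξ2 ∧
                    pre (t+1) (U1v ω) = υ1 ∧ pre (t+1) (U2v ω) = υ2)
        = PsiP σ t ι ξ1 ξ2 υ1 υ2) := by
  have key : ∀ K A N D : ℝ, 0 < K → 0 < A →
      (K * (A * N)) / (K * (A * D)) = (K * (1 * N)) / (K * (1 * D)) := by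
    intro K A N D hK hA
    rw [one_mul, one_mul, show K*(A*N) = (K*A)*N by ring, show K*(A*D) = (K*A)*D by ring,
      mul_div_mul_left _ _ (ne_of_gt (mul_pos hK hA)), mul_div_mul_left _ _ (ne_of_gt hK)]
  constructor
  · intro hpos
    have hm_den_g := master1 (σ := σ) (γ := γ) ht ι _ (evinv_E1 (ι := ι)) (fun ω h => h)
    have hm_num_g := master1 (σ := σ) (γ := γ) ht ι _
      (evinv_N1 (ι := ι) (ξ1 := ξ1) (ξ2 := ξ2) (υ1 := υ1) (υ2 := υ2) (mt := mt))
      (fun ω h => h.2)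
    have hm_den_h := master1 (σ := σ) (γ := advOpen M ι) ht ι _ (evinv_E1 (ι := ι))
      (fun ω h => h)
    have hm_num_h := master1 (σ := σ) (γ := advOpen M ι) ht ι _
      (evinv_N1 (ι := ι) (ξ1 := ξ1) (ξ2 := ξ2) (υ1 := υ1) (υ2 := υ2) (mt := mt))
      (fun ω h => h.2)
    have hADpos : 0 < Agam γ ι t * SS1 σ t (fun ω => teamCom t ω = ι) := by
      have h0 := hpos
      rw [hm_den_g] at h0
      rcases mul_pos_iff.mp h0 with ⟨_, h⟩ | ⟨h1, _⟩
      · exact h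
      · exact absurd h1 (not_lt.mpr (le_of_lt KK1_pos))
    have hpair : 0 < Agam γ ι t ∧ 0 < SS1 σ t (fun ω => teamCom t ω = ι) := by
      rcases mul_pos_iff.mp hADpos with h | ⟨h1, _⟩
      · exact h
      · exact absurd h1 (not_lt.mpr Agam_nonneg)
    have hposh : 0 < pr σ (advOpen M ι) teamComP (fun ω => teamCom t ω = ι) := by
      rw [hm_den_h, Agam_open, one_mul]
      exact mul_pos KK1_pos hpair.2
    unfold Psi
    rw [if_pos hposh]
    simp only [cpr]
    rw [hm_num_g, hm_den_g, hm_num_h, hm_den_h, Agam_open]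
    exact key _ _ _ _ KK1_pos hpair.1
  · intro hpos
    have hm_den_g := master2 (σ := σ) (γ := γ) ht ι _ (evinv_E2 (ι := ι)) (fun ω h => h)
    have hm_num_g := master2 (σ := σ) (γ := γ) ht ι _
      (evinv_N2 (ι := ι) (ξ1 := ξ1) (ξ2 := ξ2) (υ1 := υ1) (υ2 := υ2))
      (fun ω h => h.2)
    have hm_den_h := master2 (σ := σ) (γ := advOpen M ι) ht ι _ (evinv_E2 (ι := ι))
      (fun ω h => h)
    have hm_num_h := master2 (σ := σ) (γ := advOpen M ι) ht ι _
      (evinv_N2 (ι := ι) (ξ1 := ξ1) (ξ2 := ξ2) (υ1 := υ1) (υ2 := υ2))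
      (fun ω h => h.2)
    have hADpos : 0 < Agam γ ι t * SS2 σ t (fun ω => teamComP t ω = ι) := by
      have h0 := hpos
      rw [hm_den_g] at h0
      rcases mul_pos_iff.mp h0 with ⟨_, h⟩ | ⟨h1, _⟩
      · exact h
      · exact absurd h1 (not_lt.mpr (le_of_lt KK2_pos))
    have hpair : 0 < Agam γ ι t ∧ 0 < SS2 σ t (fun ω => teamComP t ω = ι) := by
      rcases mul_pos_iff.mp hADpos with h | ⟨h1, _⟩
      · exact h
      · exact absurd h1 (not_lt.mpr Agam_nonneg)
    have hposh : 0 < pr σ (advOpen M ι) teamComP (fun ω => teamComP t ω = ι) := by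
      rw [hm_den_h, Agam_open, one_mul]
      exact mul_pos KK2_pos hpair.2
    unfold PsiP
    rw [if_pos hposh]
    simp only [cpr]
    rw [hm_num_g, hm_den_g, hm_num_h, hm_den_h, Agam_open]
    exact key _ _ _ _ KK2_pos hpair.1

end TA
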